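/- Let X and Y be locally compact, connected Hausdorff spaces, ρ a quasi-integral on C_c(X) whose corresponding topological measure μ is simple, and η a quasi-integral on C_c(Y) with corresponding compact-finite topological measure ν. The functional η × ρ is a quasi-integral; let ν × μ denote its corresponding topological measure on X × Y. Then for every open U ⊆ X × Y, the set {y ∈ Y : μ(U_y) = 1} is open and (ν × μ)(U) = ν({y ∈ Y : μ(U_y) = 1}), where U_y = {x ∈ X : (x,y) ∈ U}. If ν is finite, then for every compact K ⊆ X × Y, the set {y ∈ Y : μ(K_y) = 1} is closed and (ν × μ)(K) = ν({y ∈ Y : μ(K_y) = 1}). -/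

import Mathlib

open scoped ENNReal CompactlySupported
open CompactlySupportedContinuousMap

namespace QLF

variable {X Y : Type*}

/-- Membership in the singly generated subalgebra `B(f)`:
`g ∈ B(f)` iff `g = φ ∘ f` for some continuous `φ` with `φ 0 = 0`. -/
def InB [TopologicalSpace X] (f g : C_c(X, ℝ)) : Prop :=
  ∃ φ : C(ℝ, ℝ), φ 0 = 0 ∧ ∀ x, g x = φ (f x)

/-- A quasi-integral (quasi-linear functional) on `C_c(X)`. -/
structure IsQuasiIntegral [TopologicalSpace X] (ρ : C_c(X, ℝ) → ℝ) : Prop where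
  smul : ∀ (a : ℝ) (f : C_c(X, ℝ)), ρ (a • f) = a * ρ f
  add : ∀ f g h : C_c(X, ℝ), InB f g → InB f h → ρ (g + h) = ρ g + ρ h
  pos : ∀ f : C_c(X, ℝ), (∀ x, 0 ≤ f x) → 0 ≤ ρ f

/-- The value of the topological measure corresponding to `ρ` on an open set. -/
noncomputable def qiOpen [TopologicalSpace X] (ρ : C_c(X, ℝ) → ℝ) (U : Set X) : ℝ≥0∞ :=
  ⨆ (f : C_c(X, ℝ)) (_ : (∀ x, 0 ≤ f x ∧ f x ≤ 1) ∧ tsupport f ⊆ U), ENNReal.ofReal (ρ f)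

open Classical in
/-- The topological measure corresponding to a quasi-integral `ρ`:
on open sets given by `qiOpen`, on other (closed) sets by outer regularity. -/
noncomputable def qiMeas [TopologicalSpace X] (ρ : C_c(X, ℝ) → ℝ) (A : Set X) : ℝ≥0∞ :=
  if IsOpen A then qiOpen ρ A
  else ⨅ (U : Set X) (_ : IsOpen U ∧ A ⊆ U), qiOpen ρ U

/-- A topological measure on `X` (as a set function on all sets; only its values on
open and closed sets are constrained/meaningful). -/
def IsTopMeasure [TopologicalSpace X] (μ : Set X → ℝ≥0∞) : Prop :=
  (∀ A B : Set X, Disjoint A B → (IsCompact A ∨ IsOpen A) → (IsCompact B ∨ IsOpen B) →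
      (IsCompact (A ∪ B) ∨ IsOpen (A ∪ B)) → μ (A ∪ B) = μ A + μ B) ∧
  (∀ U : Set X, IsOpen U → μ U = ⨆ (K : Set X) (_ : IsCompact K ∧ K ⊆ U), μ K) ∧
  (∀ F : Set X, IsClosed F → μ F = ⨅ (U : Set X) (_ : IsOpen U ∧ F ⊆ U), μ U)

/-- A simple topological measure: assumes only the values 0 and 1 on open and closed sets. -/
def IsSimpleTM [TopologicalSpace X] (μ : Set X → ℝ≥0∞) : Prop :=
  IsTopMeasure μ ∧ ∀ A : Set X, IsOpen A ∨ IsClosed A → μ A = 0 ∨ μ A = 1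

/-- A simple quasi-integral: its corresponding topological measure assumes only 0 and 1. -/
def IsSimpleQI [TopologicalSpace X] (ρ : C_c(X, ℝ) → ℝ) : Prop :=
  ∀ A : Set X, IsOpen A ∨ IsClosed A → qiMeas ρ A = 0 ∨ qiMeas ρ A = 1

/-- An almost simple quasi-integral: its corresponding topological measure is a positive
scalar multiple of a simple topological measure. -/
def IsAlmostSimpleQI [TopologicalSpace X] (ρ : C_c(X, ℝ) → ℝ) : Prop :=
  ∃ (c : ℝ≥0∞) (μ' : Set X → ℝ≥0∞), 0 < c ∧ c ≠ ∞ ∧ IsSimpleTM μ' ∧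
    ∀ A : Set X, IsOpen A ∨ IsClosed A → qiMeas ρ A = c * μ' A

/-- The composition `φ ∘ f` as an element of `C_c(X, ℝ)`, for continuous `φ` with `φ 0 = 0`. -/
noncomputable def compCc [TopologicalSpace X] (φ : C(ℝ, ℝ)) (hφ : φ 0 = 0)
    (f : C_c(X, ℝ)) : C_c(X, ℝ) :=
  ⟨⟨fun x => φ (f x), φ.continuous.comp f.continuous⟩, f.hasCompactSupport'.comp_left hφ⟩

section Products

variable [TopologicalSpace X] [TopologicalSpace Y]

/-- The section `f_y ∈ C_c(X)` of `f ∈ C_c(X × Y)`, `f_y (x) = f (x, y)`. -/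
noncomputable def fiberY [T2Space X] (f : C_c(X × Y, ℝ)) (y : Y) : C_c(X, ℝ) :=
  ⟨⟨fun x => f (x, y), f.continuous.comp (continuous_id.prodMk continuous_const)⟩,
    HasCompactSupport.intro (f.hasCompactSupport'.image continuous_fst)
      (fun x hx => by
        by_contra h
        exact hx ⟨(x, y), subset_tsupport _ h, rfl⟩)⟩

/-- The section `f_x ∈ C_c(Y)` of `f ∈ C_c(X × Y)`, `f_x (y) = f (x, y)`. -/
noncomputable def fiberX [T2Space Y] (f : C_c(X × Y, ℝ)) (x : X) : C_c(Y, ℝ) :=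
  ⟨⟨fun y => f (x, y), f.continuous.comp (continuous_const.prodMk continuous_id)⟩,
    HasCompactSupport.intro (f.hasCompactSupport'.image continuous_snd)
      (fun y hy => by
        by_contra h
        exact hy ⟨(x, y), subset_tsupport _ h, rfl⟩)⟩

/-- `T_ρ(f) (y) = ρ (f_y)` as a bare function on `Y`. -/
noncomputable def Tmap [T2Space X] (ρ : C_c(X, ℝ) → ℝ) (f : C_c(X × Y, ℝ)) : Y → ℝ :=
  fun y => ρ (fiberY f y)

/-- `S_η(f) (x) = η (f_x)` as a bare function on `X`. -/
noncomputable def Smap [T2Space Y] (η : C_c(Y, ℝ) → ℝ) (f : C_c(X × Y, ℝ)) : X → ℝ :=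
  fun x => η (fiberX f x)

open Classical in
/-- `T_ρ(f)` as an element of `C_c(Y, ℝ)` (when `ρ` is a quasi-integral, `T_ρ(f)` is indeed
continuous with compact support, and this definition takes the first branch). -/
noncomputable def TCc [T2Space X] (ρ : C_c(X, ℝ) → ℝ) (f : C_c(X × Y, ℝ)) : C_c(Y, ℝ) :=
  if h : Continuous (Tmap ρ f) ∧ HasCompactSupport (Tmap ρ f)
  then ⟨⟨Tmap ρ f, h.1⟩, h.2⟩ else 0

open Classical in
/-- `S_η(f)` as an element of `C_c(X, ℝ)`. -/
noncomputable def SCc [T2Space Y] (η : C_c(Y, ℝ) → ℝ) (f : C_c(X × Y, ℝ)) : C_c(X, ℝ) :=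
  if h : Continuous (Smap η f) ∧ HasCompactSupport (Smap η f)
  then ⟨⟨Smap η f, h.1⟩, h.2⟩ else 0

/-- The repeated quasi-integral `(η × ρ) (f) = η (T_ρ (f))`. -/
noncomputable def prodQI [T2Space X] (η : C_c(Y, ℝ) → ℝ) (ρ : C_c(X, ℝ) → ℝ) :
    C_c(X × Y, ℝ) → ℝ := fun f => η (TCc ρ f)

/-- The repeated quasi-integral `(ρ × η) (f) = ρ (S_η (f))`. -/
noncomputable def prodQI' [T2Space Y] (ρ : C_c(X, ℝ) → ℝ) (η : C_c(Y, ℝ) → ℝ) :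
    C_c(X × Y, ℝ) → ℝ := fun f => ρ (SCc η f)

/-- The tensor product `(g ⊗ h) (x, y) = g (x) * h (y)` as an element of `C_c(X × Y, ℝ)`. -/
noncomputable def tensor (g : C_c(X, ℝ)) (h : C_c(Y, ℝ)) : C_c(X × Y, ℝ) :=
  ⟨⟨fun p => g p.1 * h p.2,
      (g.continuous.comp continuous_fst).mul (h.continuous.comp continuous_snd)⟩,
    HasCompactSupport.intro' (g.hasCompactSupport'.prod h.hasCompactSupport')
      ((isClosed_tsupport _).prod (isClosed_tsupport _))
      (fun p hp => by
        rcases not_and_or.mp (by simpa [Set.mem_prod] using hp) with h1 | h1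
        · simp [image_eq_zero_of_notMem_tsupport h1]
        · simp [image_eq_zero_of_notMem_tsupport h1])⟩

end Products

/-- A topological measure is subadditive (equivalently, extends to a Borel measure). -/
def IsSubadditiveOnOpens [TopologicalSpace X] (μ : Set X → ℝ≥0∞) : Prop :=
  ∀ U V : Set X, IsOpen U → IsOpen V → μ (U ∪ V) ≤ μ U + μ V

/-- `μ` is a positive scalar multiple of a point mass `δ_{x₀}` (on open and closed sets). -/
def IsPointMassMultiple [TopologicalSpace X] (μ : Set X → ℝ≥0∞) : Prop :=
  ∃ (c : ℝ≥0∞) (x₀ : X), 0 < c ∧ c ≠ ∞ ∧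
    ∀ A : Set X, IsOpen A ∨ IsClosed A →
      μ A = c * A.indicator (fun _ => (1 : ℝ≥0∞)) x₀

end QLF
namespace QLF

open Set

section Basic
variable {Z : Type*} [TopologicalSpace Z] {τ : C_c(Z, ℝ) → ℝ}

lemma compCc_apply {φ : C(ℝ, ℝ)} {hφ : φ 0 = 0} {f : C_c(Z, ℝ)} (x : Z) :
    compCc φ hφ f x = φ (f x) := rfl

lemma tsupport_compCc_subset {φ : C(ℝ, ℝ)} {hφ : φ 0 = 0} {f : C_c(Z, ℝ)} :
    tsupport (compCc φ hφ f) ⊆ tsupport f := by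
  apply closure_mono
  intro x hx
  simp only [Function.mem_support] at hx ⊢
  intro h0
  apply hx
  show φ (f x) = 0
  rw [h0, hφ]

lemma qi_zero (hτ : IsQuasiIntegral τ) : τ 0 = 0 := by
  have h := hτ.smul 0 0
  have h2 : (0 : ℝ) • (0 : C_c(Z, ℝ)) = 0 := by ext x; simp
  rw [h2] at h
  linarith

lemma qi_neg (hτ : IsQuasiIntegral τ) (f : C_c(Z, ℝ)) : τ (-f) = - τ f := by
  have h2 : (-1 : ℝ) • f = -f := by ext x; simp
  have := hτ.smul (-1) f
  rw [h2] at this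
  linarith

lemma qi_comp_add (hτ : IsQuasiIntegral τ) (w : C_c(Z, ℝ)) (φ ψ : C(ℝ, ℝ))
    (hφ : φ 0 = 0) (hψ : ψ 0 = 0) :
    τ (compCc φ hφ w + compCc ψ hψ w) = τ (compCc φ hφ w) + τ (compCc ψ hψ w) :=
  hτ.add w _ _ ⟨φ, hφ, fun _ => rfl⟩ ⟨ψ, hψ, fun _ => rfl⟩

lemma qi_split (hτ : IsQuasiIntegral τ) (w v : C_c(Z, ℝ)) (φ ψ : C(ℝ, ℝ))
    (hφ : φ 0 = 0) (hψ : ψ 0 = 0) (hv : ∀ x, v x = φ (w x) + ψ (w x)) :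
    τ v = τ (compCc φ hφ w) + τ (compCc ψ hψ w) := by
  have he : v = compCc φ hφ w + compCc ψ hψ w := by
    ext x
    simp only [coe_add, Pi.add_apply, compCc_apply]
    exact hv x
  rw [he]
  exact qi_comp_add hτ w φ ψ hφ hψ

end Basic
end QLF
namespace QLF

open Set

section Maps

/-- `s ↦ min s t`. -/
noncomputable def cmin (t : ℝ) : C(ℝ, ℝ) := ⟨fun s => min s t, continuous_id.min continuous_const⟩
/-- `s ↦ (s - t)⁺`. -/
noncomputable def crest (t : ℝ) : C(ℝ, ℝ) :=
  ⟨fun s => max (s - t) 0, (continuous_id.sub continuous_const).max continuous_const⟩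
/-- `s ↦ s⁺`. -/
noncomputable def cpos : C(ℝ, ℝ) := ⟨fun s => max s 0, continuous_id.max continuous_const⟩
/-- `s ↦ s⁻`. -/
noncomputable def cneg : C(ℝ, ℝ) := ⟨fun s => max (-s) 0, continuous_neg.max continuous_const⟩

@[simp] lemma cmin_apply (t s : ℝ) : cmin t s = min s t := rfl
@[simp] lemma crest_apply (t s : ℝ) : crest t s = max (s - t) 0 := rfl
@[simp] lemma cpos_apply (s : ℝ) : cpos s = max s 0 := rfl
@[simp] lemma cneg_apply (s : ℝ) : cneg s = max (-s) 0 := rfl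

lemma cmin_zero {t : ℝ} (ht : 0 ≤ t) : cmin t 0 = 0 := by simp [ht]
lemma crest_zero {t : ℝ} (ht : 0 ≤ t) : crest t 0 = 0 := by simp [ht]
lemma cpos_zero : cpos 0 = 0 := by simp
lemma cneg_zero : cneg 0 = 0 := by simp

end Maps

section Basic2
variable {Z : Type*} [TopologicalSpace Z] {τ : C_c(Z, ℝ) → ℝ}

/-- positive part as `C_c`. -/
noncomputable def pPart (f : C_c(Z, ℝ)) : C_c(Z, ℝ) := compCc cpos cpos_zero f
/-- negative part as `C_c`. -/
noncomputable def nPart (f : C_c(Z, ℝ)) : C_c(Z, ℝ) := compCc cneg cneg_zero f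

lemma pPart_apply (f : C_c(Z, ℝ)) (x : Z) : pPart f x = max (f x) 0 := rfl
lemma nPart_apply (f : C_c(Z, ℝ)) (x : Z) : nPart f x = max (-(f x)) 0 := rfl

lemma pPart_nonneg (f : C_c(Z, ℝ)) (x : Z) : 0 ≤ pPart f x := le_max_right _ _
lemma nPart_nonneg (f : C_c(Z, ℝ)) (x : Z) : 0 ≤ nPart f x := le_max_right _ _

lemma tsupport_pPart_subset (f : C_c(Z, ℝ)) : tsupport (pPart f) ⊆ tsupport f :=
  tsupport_compCc_subset
lemma tsupport_nPart_subset (f : C_c(Z, ℝ)) : tsupport (nPart f) ⊆ tsupport f :=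
  tsupport_compCc_subset

/-- `τ f = τ f⁺ - τ f⁻`. -/
lemma qi_posneg (hτ : IsQuasiIntegral τ) (f : C_c(Z, ℝ)) :
    τ f = τ (pPart f) - τ (nPart f) := by
  have hmz : (cmin 0) 0 = 0 := cmin_zero le_rfl
  have hsplit := qi_split hτ f f cpos (cmin 0) cpos_zero hmz
    (fun x => by
      rcases le_total (f x) 0 with h | h
      · rw [cpos_apply, cmin_apply, max_eq_right h, min_eq_left h]; ring
      · rw [cpos_apply, cmin_apply, max_eq_left h, min_eq_right h]; ring)
  have hneg : compCc (cmin 0) hmz f = (-1 : ℝ) • nPart f := by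
    ext x
    simp only [compCc_apply, cmin_apply, CompactlySupportedContinuousMap.smul_apply, nPart_apply]
    rcases le_total (f x) 0 with h | h
    · rw [min_eq_left h, max_eq_left (by linarith)]; simp only [smul_eq_mul]; ring
    · rw [min_eq_right h, max_eq_right (by linarith)]; simp only [smul_eq_mul]; ring
  rw [hsplit, hneg, hτ.smul]
  show τ (pPart f) + (-1) * τ (nPart f) = _
  ring

/-- splitting off the part above level `t`. -/
lemma qi_split_min (hτ : IsQuasiIntegral τ) (f : C_c(Z, ℝ)) {t : ℝ} (ht : 0 ≤ t) :
    τ f = τ (compCc (cmin t) (cmin_zero ht) f) + τ (compCc (crest t) (crest_zero ht) f) :=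
  qi_split hτ f f (cmin t) (crest t) (cmin_zero ht) (crest_zero ht)
    (fun x => by
      rcases le_total (f x) t with h | h
      · rw [cmin_apply, crest_apply, min_eq_left h, max_eq_right (by linarith)]; ring
      · rw [cmin_apply, crest_apply, min_eq_right h, max_eq_left (by linarith)]; ring)

end Basic2
end QLF
namespace QLF

open Set

section Meas
variable {Z : Type*} [TopologicalSpace Z] {τ : C_c(Z, ℝ) → ℝ}

lemma le_qiOpen (τ : C_c(Z, ℝ) → ℝ) {f : C_c(Z, ℝ)} {U : Set Z}
    (h1 : ∀ x, 0 ≤ f x ∧ f x ≤ 1) (h2 : tsupport f ⊆ U) :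
    ENNReal.ofReal (τ f) ≤ qiOpen τ U :=
  le_iSup₂ (f := fun (f : C_c(Z, ℝ)) (_ : (∀ x, 0 ≤ f x ∧ f x ≤ 1) ∧ tsupport f ⊆ U) =>
    ENNReal.ofReal (τ f)) f ⟨h1, h2⟩

lemma qiOpen_mono (τ : C_c(Z, ℝ) → ℝ) {U V : Set Z} (h : U ⊆ V) :
    qiOpen τ U ≤ qiOpen τ V :=
  iSup₂_le fun f hf => le_qiOpen τ hf.1 (hf.2.trans h)

lemma qiOpen_empty (hτ : IsQuasiIntegral τ) : qiOpen τ (∅ : Set Z) = 0 := by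
  refine le_antisymm (iSup₂_le fun f hf => ?_) zero_le
  have hf0 : f = 0 := by
    ext x
    by_contra hx
    exact (hf.2 (subset_closure (Function.mem_support.2 hx))).elim
  rw [hf0, qi_zero hτ]
  simp

lemma qiMeas_of_isOpen (τ : C_c(Z, ℝ) → ℝ) {U : Set Z} (hU : IsOpen U) :
    qiMeas τ U = qiOpen τ U := if_pos hU

lemma qiMeas_eq_iInf (τ : C_c(Z, ℝ) → ℝ) (A : Set Z) :
    qiMeas τ A = ⨅ (U : Set Z) (_ : IsOpen U ∧ A ⊆ U), qiOpen τ U := by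
  unfold qiMeas
  split_ifs with hA
  · refine le_antisymm (le_iInf₂ fun U hU => qiOpen_mono τ hU.2) ?_
    exact iInf₂_le A ⟨hA, subset_rfl⟩
  · rfl

lemma qiMeas_le_qiOpen (τ : C_c(Z, ℝ) → ℝ) {A U : Set Z} (hU : IsOpen U) (hAU : A ⊆ U) :
    qiMeas τ A ≤ qiOpen τ U := by
  rw [qiMeas_eq_iInf]
  exact iInf₂_le U ⟨hU, hAU⟩

/-- scaled upper bound: if `0 ≤ f ≤ c` and `tsupport f ⊆ U` then `τ f ≤ c · μ U`. -/
lemma tau_ofReal_le (hτ : IsQuasiIntegral τ) {f : C_c(Z, ℝ)} {U : Set Z} {c : ℝ}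
    (hc : 0 < c) (h0 : ∀ x, 0 ≤ f x) (h1 : ∀ x, f x ≤ c) (h2 : tsupport f ⊆ U) :
    ENNReal.ofReal (τ f) ≤ ENNReal.ofReal c * qiOpen τ U := by
  have hkey : τ f = c * τ (c⁻¹ • f) := by
    rw [← hτ.smul]
    congr 1
    ext x
    simp only [CompactlySupportedContinuousMap.smul_apply, smul_eq_mul]
    field_simp
  have hb : ∀ x, 0 ≤ (c⁻¹ • f) x ∧ (c⁻¹ • f) x ≤ 1 := by
    intro x
    simp only [CompactlySupportedContinuousMap.smul_apply, smul_eq_mul]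
    constructor
    · exact mul_nonneg (by positivity) (h0 x)
    · rw [inv_mul_le_iff₀ hc, mul_one]
      exact h1 x
  have hsupp : tsupport (c⁻¹ • f) ⊆ U := by
    refine subset_trans (closure_mono ?_) h2
    intro x hx
    simp only [Function.mem_support, CompactlySupportedContinuousMap.smul_apply, smul_eq_mul] at hx ⊢
    intro h; rw [h, mul_zero] at hx; exact hx rfl
  rw [hkey, ENNReal.ofReal_mul hc.le]
  exact mul_le_mul_right (le_qiOpen τ hb hsupp) _

lemma tau_eq_zero_of_null (hτ : IsQuasiIntegral τ) {f : C_c(Z, ℝ)} {U : Set Z} {c : ℝ}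
    (hc : 0 < c) (h0 : ∀ x, 0 ≤ f x) (h1 : ∀ x, f x ≤ c) (h2 : tsupport f ⊆ U)
    (hU : qiOpen τ U = 0) : τ f = 0 := by
  have := tau_ofReal_le hτ hc h0 h1 h2
  rw [hU, mul_zero, nonpos_iff_eq_zero, ENNReal.ofReal_eq_zero] at this
  exact le_antisymm this (hτ.pos f h0)

lemma tau_le_mul_toReal (hτ : IsQuasiIntegral τ) {f : C_c(Z, ℝ)} {U : Set Z} {c : ℝ}
    (hc : 0 < c) (h0 : ∀ x, 0 ≤ f x) (h1 : ∀ x, f x ≤ c) (h2 : tsupport f ⊆ U)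
    (hU : qiOpen τ U ≠ ∞) : τ f ≤ c * (qiOpen τ U).toReal := by
  have h := tau_ofReal_le hτ hc h0 h1 h2
  have h' := ENNReal.toReal_mono (by
      exact ENNReal.mul_ne_top ENNReal.ofReal_ne_top hU) h
  rw [ENNReal.toReal_ofReal (hτ.pos f h0)] at h'
  rwa [ENNReal.toReal_mul, ENNReal.toReal_ofReal hc.le] at h'

end Meas
end QLF
namespace QLF

open Set

section Flat
variable {Z : Type*} [TopologicalSpace Z] {τ : C_c(Z, ℝ) → ℝ}

/-- Cross-algebra monotonicity via flatness: if `h = 1` where `g > 0`, then `τ g ≤ τ h`. -/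
lemma flat_mono (hτ : IsQuasiIntegral τ) {g h : C_c(Z, ℝ)}
    (hg0 : ∀ x, 0 ≤ g x) (hg1 : ∀ x, g x ≤ 1)
    (hh0 : ∀ x, 0 ≤ h x) (hh1 : ∀ x, h x ≤ 1)
    (hflat : ∀ x, 0 < g x → h x = 1) : τ g ≤ τ h := by
  set w : C_c(Z, ℝ) := h + g with hw
  have hwx : ∀ x, w x = h x + g x := fun x => by simp [hw, coe_add]
  -- φ a := min s 1 - max (s-1) 0  (gives h); φ b := max (s - 1) 0 (gives g)
  have hφa : ((cmin 1) - (crest 1)) 0 = 0 := by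
    simp [cmin, crest]
  have hφb : (crest 1) 0 = 0 := crest_zero zero_le_one
  have key := qi_split hτ w h ((cmin 1) - (crest 1)) (crest 1) hφa hφb (fun x => by
    simp only [ContinuousMap.sub_apply, cmin_apply, crest_apply]
    rcases eq_or_lt_of_le (hg0 x) with hgx | hgx
    · have hwv : w x = h x := by rw [hwx x, ← hgx, add_zero]
      rw [hwv, min_eq_left (hh1 x), max_eq_right (by linarith [hh1 x])]
      ring
    · have hhx := hflat x hgx
      have hwv : w x = 1 + g x := by rw [hwx x, hhx]
      rw [hwv, hhx, min_eq_right (by linarith), max_eq_left (by linarith)]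
      ring)
  have hgeq : compCc (crest 1) hφb w = g := by
    ext x
    simp only [compCc_apply, crest_apply]
    rcases eq_or_lt_of_le (hg0 x) with hgx | hgx
    · rw [hwx x, ← hgx, add_zero, max_eq_right (by linarith [hh1 x])]
    · rw [hwx x, hflat x hgx, max_eq_left (by linarith)]
      ring
  rw [hgeq] at key
  have hpos : 0 ≤ τ (compCc ((cmin 1) - (crest 1)) hφa w) := by
    apply hτ.pos
    intro x
    simp only [compCc_apply, ContinuousMap.sub_apply, cmin_apply, crest_apply]
    rcases eq_or_lt_of_le (hg0 x) with hgx | hgx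
    · rw [hwx x, ← hgx, add_zero, min_eq_left (hh1 x), max_eq_right (by linarith [hh1 x])]
      simpa using hh0 x
    · rw [hwx x, hflat x hgx, min_eq_right (by linarith), max_eq_left (by linarith)]
      linarith [hg1 x]
  linarith [key]

/-- Version with level `c`: if `g ≤ c` and `h ≥ c` wherever `g > 0`, `h ≥ 0`, then `τ g ≤ τ h`. -/
lemma flat_mono' (hτ : IsQuasiIntegral τ) {g h : C_c(Z, ℝ)} {c : ℝ} (hc : 0 < c)
    (hg0 : ∀ x, 0 ≤ g x) (hgc : ∀ x, g x ≤ c)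
    (hh0 : ∀ x, 0 ≤ h x)
    (hflat : ∀ x, 0 < g x → c ≤ h x) : τ g ≤ τ h := by
  -- first cut h at level c
  have hsplit := qi_split_min hτ h hc.le
  have hrest : 0 ≤ τ (compCc (crest c) (crest_zero hc.le) h) := by
    apply hτ.pos
    intro x
    simp only [compCc_apply, crest_apply]
    exact le_max_right _ _
  set h' : C_c(Z, ℝ) := compCc (cmin c) (cmin_zero hc.le) h with hh'
  have hh'le : τ h' ≤ τ h := by linarith
  -- now scale to level 1
  have hmain : τ (c⁻¹ • g) ≤ τ (c⁻¹ • h') := by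
    apply flat_mono hτ
    · intro x; simp only [CompactlySupportedContinuousMap.smul_apply, smul_eq_mul]; exact mul_nonneg (by positivity) (hg0 x)
    · intro x; simp only [CompactlySupportedContinuousMap.smul_apply, smul_eq_mul]
      rw [inv_mul_le_iff₀ hc, mul_one]; exact hgc x
    · intro x
      simp only [CompactlySupportedContinuousMap.smul_apply, smul_eq_mul, hh', compCc_apply, cmin_apply]
      exact mul_nonneg (by positivity) (le_min (hh0 x) hc.le)
    · intro x
      simp only [CompactlySupportedContinuousMap.smul_apply, smul_eq_mul, hh', compCc_apply, cmin_apply]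
      rw [inv_mul_le_iff₀ hc, mul_one]
      exact min_le_right _ _
    · intro x hx
      simp only [CompactlySupportedContinuousMap.smul_apply, smul_eq_mul] at hx ⊢
      have hgx : 0 < g x := by
        by_contra hcon
        push_neg at hcon
        have : g x = 0 := le_antisymm hcon (hg0 x)
        rw [this, mul_zero] at hx; exact lt_irrefl _ hx
      have := hflat x hgx
      simp only [hh', compCc_apply, cmin_apply]
      rw [min_eq_right this]
      field_simp
  have e1 := hτ.smul c (c⁻¹ • g)
  have e2 := hτ.smul c (c⁻¹ • h')
  have hgg : c • (c⁻¹ • g) = g := by ext x; simp only [CompactlySupportedContinuousMap.smul_apply, smul_eq_mul]; field_simp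
  have hhh : c • (c⁻¹ • h') = h' := by ext x; simp only [CompactlySupportedContinuousMap.smul_apply, smul_eq_mul]; field_simp
  rw [hgg] at e1
  rw [hhh] at e2
  have : τ g ≤ τ h' := by
    rw [e1, e2]
    exact mul_le_mul_of_nonneg_left hmain hc.le
  linarith

/-- L3': any function which is `1` on `V` dominates `qiOpen τ V`. -/
lemma qiOpen_le_of_one_on (hτ : IsQuasiIntegral τ) {h : C_c(Z, ℝ)} {V : Set Z}
    (hh0 : ∀ x, 0 ≤ h x) (hh1 : ∀ x, h x ≤ 1) (hone : ∀ x ∈ V, h x = 1) :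
    qiOpen τ V ≤ ENNReal.ofReal (τ h) := by
  refine iSup₂_le fun g hg => ENNReal.ofReal_le_ofReal ?_
  apply flat_mono hτ (fun x => (hg.1 x).1) (fun x => (hg.1 x).2) hh0 hh1
  intro x hx
  exact hone x (hg.2 (subset_closure (Function.mem_support.2 (ne_of_gt hx))))

/-- L4: adding a flat bump. -/
lemma add_flat (hτ : IsQuasiIntegral τ) {v e : C_c(Z, ℝ)} {c : ℝ} (hc : 0 ≤ c)
    (hv : ∀ x, 0 ≤ v x) (he0 : ∀ x, 0 ≤ e x) (he1 : ∀ x, e x ≤ 1)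
    (hflat : ∀ x, 0 < v x → e x = 1) :
    τ (v + c • e) = τ v + c * τ e := by
  rcases eq_or_lt_of_le hc with hc0 | hc0
  · have : c • e = 0 := by ext x; simp [← hc0]
    rw [this, add_zero, ← hc0, zero_mul, add_zero]
  set w : C_c(Z, ℝ) := v + c • e with hw
  have hwx : ∀ x, w x = v x + c * e x := fun x => by simp [hw, coe_add, CompactlySupportedContinuousMap.smul_apply]
  have hsplit := qi_split hτ w w (crest c) (cmin c) (crest_zero hc) (cmin_zero hc)
    (fun x => by
      simp only [crest_apply, cmin_apply]
      rcases le_total (w x) c with hx | hx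
      · rw [max_eq_right (by linarith), min_eq_left hx]; ring
      · rw [max_eq_left (by linarith), min_eq_right hx]; ring)
  have hvw : compCc (crest c) (crest_zero hc) w = v := by
    ext x
    simp only [compCc_apply, crest_apply]
    rcases eq_or_lt_of_le (hv x) with hvx | hvx
    · have hwc : w x = c * e x := by rw [hwx x, ← hvx, zero_add]
      have hle : c * e x ≤ c * 1 := mul_le_mul_of_nonneg_left (he1 x) hc
      rw [hwc, max_eq_right (by linarith)]
      exact hvx
    · have : w x = v x + c := by rw [hwx x, hflat x hvx, mul_one]
      rw [this, max_eq_left (by linarith)]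
      ring
  have hew : compCc (cmin c) (cmin_zero hc) w = c • e := by
    ext x
    simp only [compCc_apply, cmin_apply, CompactlySupportedContinuousMap.smul_apply, smul_eq_mul]
    rcases eq_or_lt_of_le (hv x) with hvx | hvx
    · have : w x = c * e x := by rw [hwx x, ← hvx, zero_add]
      rw [this, min_eq_left]
      have : c * e x ≤ c * 1 := mul_le_mul_of_nonneg_left (he1 x) hc
      linarith
    · have : w x = v x + c := by rw [hwx x, hflat x hvx, mul_one]
      rw [this, min_eq_right (by linarith), hflat x hvx, mul_one]
  rw [hvw, hew, hτ.smul] at hsplit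
  exact hsplit

end Flat
end QLF
namespace QLF

open Set

section Simple
variable {Z : Type*} [TopologicalSpace Z] {ρ : C_c(Z, ℝ) → ℝ}

lemma cc_bound (k : C_c(Z, ℝ)) : ∃ C : ℝ, 0 < C ∧ ∀ x, |k x| ≤ C := by
  obtain ⟨C, hC⟩ := k.continuous.bounded_above_of_compact_support k.hasCompactSupport'
  exact ⟨max C 0 + 1, by positivity, fun x => by
    have := hC x
    rw [Real.norm_eq_abs] at this
    calc |k x| ≤ C := this
    _ ≤ max C 0 + 1 := by
        have := le_max_left C (0:ℝ); linarith⟩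

lemma simple_qiOpen01 (hρs : IsSimpleQI ρ) {U : Set Z} (hU : IsOpen U) :
    qiOpen ρ U = 0 ∨ qiOpen ρ U = 1 := by
  have := hρs U (Or.inl hU)
  rwa [qiMeas_of_isOpen _ hU] at this

lemma simple_qiOpen_le_one (hρs : IsSimpleQI ρ) {U : Set Z} (hU : IsOpen U) :
    qiOpen ρ U ≤ 1 := by
  rcases simple_qiOpen01 hρs hU with h | h <;> simp [h]

lemma simple_toReal_le_one (hρs : IsSimpleQI ρ) {U : Set Z} (hU : IsOpen U) :
    (qiOpen ρ U).toReal ≤ 1 := by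
  rcases simple_qiOpen01 hρs hU with h | h <;> simp [h]

/-- for simple `ρ`: `0 ≤ f ≤ c` implies `ρ f ≤ c`. -/
lemma tau_le_c (hρ : IsQuasiIntegral ρ) (hρs : IsSimpleQI ρ) {f : C_c(Z, ℝ)} {c : ℝ}
    (hc : 0 < c) (h0 : ∀ x, 0 ≤ f x) (h1 : ∀ x, f x ≤ c) : ρ f ≤ c := by
  have h := tau_le_mul_toReal hρ hc h0 h1 (subset_univ _)
    (by rcases simple_qiOpen01 hρs isOpen_univ with h | h <;> simp [h])
  calc ρ f ≤ c * (qiOpen ρ univ).toReal := h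
  _ ≤ c * 1 := mul_le_mul_of_nonneg_left (simple_toReal_le_one hρs isOpen_univ) hc.le
  _ = c := mul_one c

lemma abs_tau_le (hρ : IsQuasiIntegral ρ) (hρs : IsSimpleQI ρ) {f : C_c(Z, ℝ)} {c : ℝ}
    (hc : 0 < c) (h : ∀ x, |f x| ≤ c) : |ρ f| ≤ c := by
  have hp : ρ (pPart f) ≤ c := tau_le_c hρ hρs hc (pPart_nonneg f)
    (fun x => by
      rw [pPart_apply]
      rcases le_total (f x) 0 with hx | hx
      · rw [max_eq_right hx]; exact hc.le
      · rw [max_eq_left hx]; have := h x; rw [abs_of_nonneg hx] at this; exact this)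
  have hn : ρ (nPart f) ≤ c := tau_le_c hρ hρs hc (nPart_nonneg f)
    (fun x => by
      rw [nPart_apply]
      rcases le_total (f x) 0 with hx | hx
      · rw [max_eq_left (by linarith)]; have := h x; rw [abs_of_nonpos hx] at this; linarith
      · rw [max_eq_right (by linarith)]; exact hc.le)
  have hp0 : 0 ≤ ρ (pPart f) := hρ.pos _ (pPart_nonneg f)
  have hn0 : 0 ≤ ρ (nPart f) := hρ.pos _ (nPart_nonneg f)
  rw [qi_posneg hρ f, abs_le]
  constructor <;> linarith

lemma exists_fun_of_lt_qiOpen {τ : C_c(Z, ℝ) → ℝ} {U : Set Z} {a : ℝ≥0∞}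
    (h : a < qiOpen τ U) :
    ∃ f : C_c(Z, ℝ), (∀ x, 0 ≤ f x ∧ f x ≤ 1) ∧ tsupport f ⊆ U ∧
      a < ENNReal.ofReal (τ f) := by
  obtain ⟨f, hf⟩ := lt_iSup_iff.mp h
  obtain ⟨hP, hlt⟩ := lt_iSup_iff.mp hf
  exact ⟨f, hP.1, hP.2, hlt⟩

/-- two disjoint open sets cannot both have measure `1` (simple `ρ`). -/
lemma not_disjoint_ones (hρ : IsQuasiIntegral ρ) (hρs : IsSimpleQI ρ) {U V : Set Z}
    (hUV : U ∩ V = ∅) (hU1 : qiOpen ρ U = 1) (hV1 : qiOpen ρ V = 1) : False := by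
  have h34 : (ENNReal.ofReal (3/4) : ℝ≥0∞) < 1 := by
    rw [show (1 : ℝ≥0∞) = ENNReal.ofReal 1 by simp]
    exact ENNReal.ofReal_lt_ofReal_iff_of_nonneg (by norm_num) |>.mpr (by norm_num)
  obtain ⟨g₁, hg₁b, hg₁s, hg₁v⟩ := exists_fun_of_lt_qiOpen (hU1 ▸ h34)
  obtain ⟨g₂, hg₂b, hg₂s, hg₂v⟩ := exists_fun_of_lt_qiOpen (hV1 ▸ h34)
  have hv₁ : (3:ℝ)/4 < ρ g₁ := by
    have := (ENNReal.ofReal_lt_ofReal_iff_of_nonneg (by norm_num)).mp hg₁v; linarith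
  have hv₂ : (3:ℝ)/4 < ρ g₂ := by
    have := (ENNReal.ofReal_lt_ofReal_iff_of_nonneg (by norm_num)).mp hg₂v; linarith
  -- pointwise disjointness
  have hdisj : ∀ x, g₁ x = 0 ∨ g₂ x = 0 := by
    intro x
    by_cases h1 : g₁ x = 0
    · exact Or.inl h1
    · right
      by_contra h2
      have hx1 : x ∈ U := hg₁s (subset_closure (Function.mem_support.2 h1))
      have hx2 : x ∈ V := hg₂s (subset_closure (Function.mem_support.2 h2))
      have : x ∈ U ∩ V := ⟨hx1, hx2⟩
      rw [hUV] at this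
      exact this
  set w : C_c(Z, ℝ) := g₁ - g₂ with hw
  have hwx : ∀ x, w x = g₁ x - g₂ x := fun x => by simp [hw, coe_sub]
  have hsplit := qi_split hρ w (g₁ + g₂) cpos cneg cpos_zero cneg_zero (fun x => by
    simp only [coe_add, Pi.add_apply, cpos_apply, cneg_apply, hwx x]
    rcases hdisj x with h | h
    · rw [h, max_eq_right (by linarith [(hg₂b x).1]), max_eq_left (by linarith [(hg₂b x).1])]
      ring
    · rw [h, max_eq_left (by linarith [(hg₁b x).1]), max_eq_right (by linarith [(hg₁b x).1])]
      ring)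
  have he1 : compCc cpos cpos_zero w = g₁ := by
    ext x
    simp only [compCc_apply, cpos_apply, hwx x]
    rcases hdisj x with h | h
    · rw [h, max_eq_right (by linarith [(hg₂b x).1])]
    · rw [h, max_eq_left (by linarith [(hg₁b x).1])]; ring
  have he2 : compCc cneg cneg_zero w = g₂ := by
    ext x
    simp only [compCc_apply, cneg_apply, hwx x]
    rcases hdisj x with h | h
    · rw [h, max_eq_left (by linarith [(hg₂b x).1])]; ring
    · rw [h, max_eq_right (by linarith [(hg₁b x).1])]
  rw [he1, he2] at hsplit
  have hsum_le : ρ (g₁ + g₂) ≤ 1 := by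
    apply tau_le_c hρ hρs one_pos
    · intro x
      simp only [coe_add, Pi.add_apply]
      exact add_nonneg (hg₁b x).1 (hg₂b x).1
    · intro x
      simp only [coe_add, Pi.add_apply]
      rcases hdisj x with h | h
      · rw [h]; linarith [(hg₂b x).2]
      · rw [h]; linarith [(hg₁b x).2]
  rw [hsplit] at hsum_le
  linarith

end Simple
end QLF
namespace QLF

open Set

/-- the essential level of `k` w.r.t. a simple quasi-integral. -/
noncomputable def rPos {Z : Type*} [TopologicalSpace Z] (ρ : C_c(Z, ℝ) → ℝ)
    (k : C_c(Z, ℝ)) : ℝ :=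
  sInf {t : ℝ | 0 < t ∧ qiOpen ρ {x | t < k x} = 0}

section RPos
variable {Z : Type*} [TopologicalSpace Z] {ρ : C_c(Z, ℝ) → ℝ}

lemma isOpen_gtset (k : C_c(Z, ℝ)) (t : ℝ) : IsOpen {x | t < k x} :=
  isOpen_lt continuous_const k.continuous

lemma rPos_set_nonempty (hρ : IsQuasiIntegral ρ) (k : C_c(Z, ℝ)) :
    {t : ℝ | 0 < t ∧ qiOpen ρ {x | t < k x} = 0}.Nonempty := by
  obtain ⟨C, hC0, hC⟩ := cc_bound k
  refine ⟨C + 1, by linarith, ?_⟩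
  have hempty : {x | C + 1 < k x} = (∅ : Set Z) := by
    ext x
    simp only [mem_setOf_eq, mem_empty_iff_false, iff_false, not_lt]
    have := hC x
    have := abs_le.mp this
    linarith [this.2]
  rw [hempty]
  exact qiOpen_empty hρ

lemma rPos_set_bddBelow (k : C_c(Z, ℝ)) :
    BddBelow {t : ℝ | 0 < t ∧ qiOpen ρ {x | t < k x} = 0} :=
  ⟨0, fun t ht => ht.1.le⟩

lemma rPos_nonneg (hρ : IsQuasiIntegral ρ) (k : C_c(Z, ℝ)) : 0 ≤ rPos ρ k :=
  le_csInf (rPos_set_nonempty hρ k) (fun t ht => ht.1.le)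

lemma null_of_rPos_lt (hρ : IsQuasiIntegral ρ) (k : C_c(Z, ℝ)) {t : ℝ}
    (h : rPos ρ k < t) : qiOpen ρ {x | t < k x} = 0 := by
  obtain ⟨t', ht'S, ht'⟩ := (csInf_lt_iff (rPos_set_bddBelow k) (rPos_set_nonempty hρ k)).mp h
  have hsub : {x | t < k x} ⊆ {x | t' < k x} := fun x hx => lt_trans ht' hx
  have := qiOpen_mono ρ hsub
  rw [ht'S.2] at this
  exact le_antisymm this zero_le

lemma one_of_lt_rPos (hρs : IsSimpleQI ρ) (k : C_c(Z, ℝ)) {t : ℝ}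
    (h0 : 0 < t) (h : t < rPos ρ k) : qiOpen ρ {x | t < k x} = 1 := by
  have hnot : t ∉ {t : ℝ | 0 < t ∧ qiOpen ρ {x | t < k x} = 0} :=
    notMem_of_lt_csInf h (rPos_set_bddBelow k)
  rcases simple_qiOpen01 hρs (isOpen_gtset k t) with hq | hq
  · exact absurd ⟨h0, hq⟩ hnot
  · exact hq

/-- Step A: for a simple quasi-integral and `k ≥ 0`, `ρ k = rPos ρ k`. -/
lemma tau_eq_rPos (hρ : IsQuasiIntegral ρ) (hρs : IsSimpleQI ρ) (k : C_c(Z, ℝ))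
    (hk : ∀ x, 0 ≤ k x) : ρ k = rPos ρ k := by
  obtain ⟨C, hC0, hC⟩ := cc_bound k
  have hr0 := rPos_nonneg hρ k
  -- upper bound
  have hub : ∀ ε : ℝ, 0 < ε → ρ k ≤ rPos ρ k + ε := by
    intro ε hε
    set t := rPos ρ k + ε with hts
    have ht : (0:ℝ) < t := by simp only [hts]; linarith
    have hsplit := qi_split_min hρ k (t := t) ht.le
    have hmin : ρ (compCc (cmin t) (cmin_zero ht.le) k) ≤ t := by
      apply tau_le_c hρ hρs ht
      · intro x; simp only [compCc_apply, cmin_apply]; exact le_min (hk x) ht.le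
      · intro x; simp only [compCc_apply, cmin_apply]; exact min_le_right _ _
    have hrest : ρ (compCc (crest t) (crest_zero ht.le) k) = 0 := by
      apply tau_eq_zero_of_null hρ hC0 (U := {x | (rPos ρ k + ε/2) < k x})
      · intro x; simp only [compCc_apply, crest_apply]; exact le_max_right _ _
      · intro x
        simp only [compCc_apply, crest_apply]
        rcases le_total (k x - t) 0 with hx | hx
        · rw [max_eq_right hx]; exact hC0.le
        · rw [max_eq_left hx]
          have := (abs_le.mp (hC x)).2
          linarith
      · have hsub : Function.support (compCc (crest t) (crest_zero ht.le) k) ⊆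
            {x | t ≤ k x} := by
          intro x hx
          simp only [Function.mem_support, compCc_apply, crest_apply] at hx
          by_contra hcon
          simp only [mem_setOf_eq, not_le] at hcon
          exact hx (max_eq_right (by linarith))
        refine subset_trans (closure_minimal hsub (isClosed_le continuous_const k.continuous)) ?_
        intro x hx
        simp only [mem_setOf_eq] at hx ⊢
        simp only [hts] at hx
        linarith
      · exact null_of_rPos_lt hρ k (by linarith)
    rw [hsplit, hrest, add_zero]
    simpa [hts] using hmin
  have hupper : ρ k ≤ rPos ρ k := by
    by_contra hcon
    push_neg at hcon
    have := hub ((ρ k - rPos ρ k)/2) (by linarith)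
    linarith
  -- lower bound
  have hlbt : ∀ t : ℝ, 0 < t → t < rPos ρ k → t ≤ ρ k := by
    intro t ht htr
    have hone := one_of_lt_rPos hρs k ht htr
    have hsplit := qi_split_min hρ k (t := t) ht.le
    set m := compCc (cmin t) (cmin_zero ht.le) k with hm
    have hmb : ∀ x, 0 ≤ m x ∧ m x ≤ t := fun x =>
      ⟨le_min (hk x) ht.le, min_le_right _ _⟩
    have hub1 : (1 : ℝ≥0∞) ≤ ENNReal.ofReal (ρ (t⁻¹ • m)) := by
      rw [← hone]
      apply qiOpen_le_of_one_on hρ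
      · intro x
        simp only [CompactlySupportedContinuousMap.smul_apply, smul_eq_mul]
        exact mul_nonneg (by positivity) (hmb x).1
      · intro x
        simp only [CompactlySupportedContinuousMap.smul_apply, smul_eq_mul]
        rw [inv_mul_le_iff₀ ht, mul_one]
        exact (hmb x).2
      · intro x hx
        simp only [mem_setOf_eq] at hx
        simp only [CompactlySupportedContinuousMap.smul_apply, smul_eq_mul, hm, compCc_apply, cmin_apply]
        rw [min_eq_right hx.le]
        field_simp
    have h1 : (1:ℝ) ≤ ρ (t⁻¹ • m) := by
      rw [← ENNReal.ofReal_one] at hub1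
      exact (ENNReal.ofReal_le_ofReal_iff (by
        by_contra hcon
        push_neg at hcon
        rw [ENNReal.ofReal_eq_zero.mpr hcon.le] at hub1
        simp at hub1)).mp hub1
    have hmm : ρ m = t * ρ (t⁻¹ • m) := by
      rw [← hρ.smul]
      congr 1
      ext x
      simp only [CompactlySupportedContinuousMap.smul_apply, smul_eq_mul]
      field_simp
    have hmt : t ≤ ρ m := by
      rw [hmm]
      calc t = t * 1 := (mul_one t).symm
      _ ≤ t * ρ (t⁻¹ • m) := mul_le_mul_of_nonneg_left h1 ht.le
    have hrest0 : 0 ≤ ρ (compCc (crest t) (crest_zero ht.le) k) :=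
      hρ.pos _ (fun x => by simp only [compCc_apply, crest_apply]; exact le_max_right _ _)
    rw [hsplit]
    rw [hm] at hmt
    linarith
  have hlower : rPos ρ k ≤ ρ k := by
    rcases eq_or_lt_of_le hr0 with h0 | h0
    · rw [← h0]; exact hρ.pos k hk
    · by_contra hcon
      push_neg at hcon
      have hρk0 : 0 ≤ ρ k := hρ.pos k hk
      set t0 := (ρ k + rPos ρ k)/2 with ht0
      have h1 : 0 < t0 := by simp only [ht0]; linarith
      have h2 : t0 < rPos ρ k := by simp only [ht0]; linarith
      have := hlbt t0 h1 h2
      simp only [ht0] at this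
      linarith
  linarith

/-- cross-algebra monotonicity for a simple quasi-integral on nonnegative functions. -/
lemma rho_mono (hρ : IsQuasiIntegral ρ) (hρs : IsSimpleQI ρ) {u v : C_c(Z, ℝ)}
    (hu : ∀ x, 0 ≤ u x) (hv : ∀ x, 0 ≤ v x) (huv : ∀ x, u x ≤ v x) : ρ u ≤ ρ v := by
  rw [tau_eq_rPos hρ hρs u hu, tau_eq_rPos hρ hρs v hv]
  apply csInf_le_csInf (rPos_set_bddBelow u) (rPos_set_nonempty hρ v)
  intro t ht
  refine ⟨ht.1, ?_⟩
  have hsub : {x | t < u x} ⊆ {x | t < v x} := fun x hx => lt_of_lt_of_le hx (huv x)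
  have := qiOpen_mono ρ hsub
  rw [ht.2] at this
  exact le_antisymm this zero_le

end RPos
end QLF
namespace QLF

open Set

section Clamp

/-- clamp a continuous map to `[-ε, ε]`. -/
noncomputable def cclamp (ψ : C(ℝ, ℝ)) (ε : ℝ) : C(ℝ, ℝ) :=
  ⟨fun s => max (min (ψ s) ε) (-ε), ((ψ.continuous.min continuous_const).max continuous_const)⟩

@[simp] lemma cclamp_apply (ψ : C(ℝ, ℝ)) (ε s : ℝ) :
    cclamp ψ ε s = max (min (ψ s) ε) (-ε) := rfl

lemma cclamp_zero {ψ : C(ℝ, ℝ)} (hψ : ψ 0 = 0) {ε : ℝ} (hε : 0 ≤ ε) :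
    cclamp ψ ε 0 = 0 := by
  simp [cclamp_apply, hψ, min_eq_left hε, max_eq_left (by linarith : -ε ≤ (0:ℝ))]

lemma abs_cclamp_le (ψ : C(ℝ, ℝ)) {ε : ℝ} (hε : 0 ≤ ε) (s : ℝ) :
    |cclamp ψ ε s| ≤ ε := by
  rw [abs_le]
  constructor
  · exact le_max_right _ _
  · exact max_le (min_le_right _ _) (by linarith)

lemma cclamp_eq_self {ψ : C(ℝ, ℝ)} {ε s : ℝ} (h : |ψ s| ≤ ε) :
    cclamp ψ ε s = ψ s := by
  rw [abs_le] at h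
  simp [cclamp_apply, min_eq_left h.2, max_eq_left (by linarith : -ε ≤ ψ s)]

end Clamp

section Comp
variable {Z : Type*} [TopologicalSpace Z] {ρ : C_c(Z, ℝ) → ℝ}

lemma tau_eq_zero_of_tsupport_null (hρ : IsQuasiIntegral ρ) {g : C_c(Z, ℝ)} {O : Set Z}
    (hsupp : tsupport g ⊆ O) (hO : qiOpen ρ O = 0) : ρ g = 0 := by
  obtain ⟨C, hC0, hC⟩ := cc_bound g
  have hp : ρ (pPart g) = 0 := by
    apply tau_eq_zero_of_null hρ hC0 (pPart_nonneg g) (fun x => by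
      rw [pPart_apply]
      refine max_le ?_ hC0.le
      exact (abs_le.mp (hC x)).2) ((tsupport_pPart_subset g).trans hsupp) hO
  have hn : ρ (nPart g) = 0 := by
    apply tau_eq_zero_of_null hρ hC0 (nPart_nonneg g) (fun x => by
      rw [nPart_apply]
      refine max_le ?_ hC0.le
      have := (abs_le.mp (hC x)).1
      linarith) ((tsupport_nPart_subset g).trans hsupp) hO
  rw [qi_posneg hρ g, hp, hn, sub_zero]

/-- small-plus-null estimate: if `ψ∘k` differs from its `ε`-clamp only on a null region. -/
lemma abs_rho_comp_le (hρ : IsQuasiIntegral ρ) (hρs : IsSimpleQI ρ) (k : C_c(Z, ℝ))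
    (ψ : C(ℝ, ℝ)) (hψ0 : ψ 0 = 0) {ε : ℝ} (hε : 0 < ε) {O : Set Z}
    (hO : qiOpen ρ O = 0)
    (hsupp : tsupport (compCc (ψ - cclamp ψ ε) (by
        simp only [ContinuousMap.sub_apply, hψ0, cclamp_zero hψ0 hε.le, sub_zero]) k) ⊆ O) :
    |ρ (compCc ψ hψ0 k)| ≤ ε := by
  have hc0 : cclamp ψ ε 0 = 0 := cclamp_zero hψ0 hε.le
  have hd0 : (ψ - cclamp ψ ε) 0 = 0 := by
    simp only [ContinuousMap.sub_apply, hψ0, hc0, sub_zero]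
  have hsplit := qi_split hρ k (compCc ψ hψ0 k) (cclamp ψ ε) (ψ - cclamp ψ ε) hc0 hd0
    (fun x => by simp only [compCc_apply, ContinuousMap.sub_apply]; ring)
  have hnull : ρ (compCc (ψ - cclamp ψ ε) hd0 k) = 0 :=
    tau_eq_zero_of_tsupport_null hρ hsupp hO
  have hsmall : |ρ (compCc (cclamp ψ ε) hc0 k)| ≤ ε :=
    abs_tau_le hρ hρs hε (fun x => abs_cclamp_le ψ hε.le (k x))
  rw [hsplit, hnull, add_zero]
  exact hsmall

end Comp
end QLF
namespace QLF

open Set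

section CompS
variable {Z : Type*} [TopologicalSpace Z] {ρ : C_c(Z, ℝ) → ℝ}

/-- (S), nonnegative case: a simple quasi-integral is multiplicative on `B(k)` for `k ≥ 0`. -/
lemma rho_comp_nonneg (hρ : IsQuasiIntegral ρ) (hρs : IsSimpleQI ρ) (k : C_c(Z, ℝ))
    (hk : ∀ x, 0 ≤ k x) (φ : C(ℝ, ℝ)) (hφ : φ 0 = 0) :
    ρ (compCc φ hφ k) = φ (ρ k) := by
  rw [tau_eq_rPos hρ hρs k hk]
  set r := rPos ρ k with hr
  have hr0 : 0 ≤ r := rPos_nonneg hρ k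
  -- it suffices to bound the difference by every positive ε
  have key : ∀ ε : ℝ, 0 < ε → |ρ (compCc φ hφ k) - φ r| ≤ ε := by
    intro ε hε
    rcases eq_or_lt_of_le hr0 with hrz | hrpos
    -- case r = 0
    · obtain ⟨δ, hδ0, hδ⟩ := Metric.continuousAt_iff.mp φ.continuous.continuousAt ε hε
      have hO : qiOpen ρ {x | δ/2 < k x} = 0 := by
        apply null_of_rPos_lt hρ k
        rw [← hr, ← hrz]; linarith
      have hres := abs_rho_comp_le hρ hρs k φ hφ hε hO ?_
      · rw [← hrz, hφ, sub_zero]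
        exact hres
      · -- support of the unclamped part
        have hsub : Function.support (⇑(compCc (φ - cclamp φ ε)
            (by simp only [ContinuousMap.sub_apply, hφ, cclamp_zero hφ hε.le, sub_zero]) k)) ⊆
            {x | δ ≤ k x} := by
          intro x hx
          simp only [Function.mem_support, compCc_apply, ContinuousMap.sub_apply] at hx
          by_contra hcon
          simp only [mem_setOf_eq, not_le] at hcon
          have habs : |φ (k x)| ≤ ε := by
            have hdist : dist (k x) 0 < δ := by
              rw [Real.dist_eq, sub_zero, abs_of_nonneg (hk x)]
              exact hcon
            have := hδ hdist
            rw [hφ, dist_zero_right, Real.norm_eq_abs] at this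
            exact this.le
          rw [cclamp_eq_self habs, sub_self] at hx
          exact hx rfl
        refine subset_trans (closure_minimal hsub (isClosed_le continuous_const k.continuous)) ?_
        intro x hx
        simp only [mem_setOf_eq] at hx ⊢
        linarith
    -- case r > 0
    · obtain ⟨δc, hδc0, hδc⟩ := Metric.continuousAt_iff.mp φ.continuous.continuousAt ε hε
      set δ := min δc r / 2 with hδdef
      have hδ0 : 0 < δ := by
        simp only [hδdef]
        have : 0 < min δc r := lt_min hδc0 hrpos
        linarith
      have hδc' : δ < δc := by
        have h1 : min δc r ≤ δc := min_le_left _ _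
        simp only [hδdef]; linarith
      have hδr : δ ≤ r/2 := by
        have h1 : min δc r ≤ r := min_le_right _ _
        simp only [hδdef]; linarith
      have hδltr : δ < r := by linarith
      -- ramps
      have hcont1 : Continuous fun s : ℝ => min (max ((4/δ)*(s - (r - 3*δ/4))) 0) 1 := by
        fun_prop
      have hcont2 : Continuous fun s : ℝ => min (max ((4/δ)*(s - (r + δ/4))) 0) 1 := by
        fun_prop
      set αC : C(ℝ, ℝ) := ⟨fun s => min (max ((4/δ)*(s - (r - 3*δ/4))) 0) 1, hcont1⟩ with hαC
      set γC : C(ℝ, ℝ) := ⟨fun s => min (max ((4/δ)*(s - (r + δ/4))) 0) 1, hcont2⟩ with hγC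
      have hα0 : αC 0 = 0 := by
        simp only [hαC, ContinuousMap.coe_mk]
        rw [max_eq_right, min_eq_left zero_le_one]
        apply mul_nonpos_of_nonneg_of_nonpos (by positivity)
        linarith
      have hγ0 : γC 0 = 0 := by
        simp only [hγC, ContinuousMap.coe_mk]
        rw [max_eq_right, min_eq_left zero_le_one]
        apply mul_nonpos_of_nonneg_of_nonpos (by positivity)
        linarith
      have hβ0 : (αC - γC) 0 = 0 := by
        simp only [ContinuousMap.sub_apply, hα0, hγ0, sub_zero]
      -- pointwise facts about the ramps
      have hα01 : ∀ s, 0 ≤ αC s ∧ αC s ≤ 1 := by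
        intro s
        simp only [hαC, ContinuousMap.coe_mk]
        exact ⟨le_min (le_max_right _ _) zero_le_one, min_le_right _ _⟩
      have hγ01 : ∀ s, 0 ≤ γC s ∧ γC s ≤ 1 := by
        intro s
        simp only [hγC, ContinuousMap.coe_mk]
        exact ⟨le_min (le_max_right _ _) zero_le_one, min_le_right _ _⟩
      have hαone : ∀ s, r - δ/2 ≤ s → αC s = 1 := by
        intro s hs
        simp only [hαC, ContinuousMap.coe_mk]
        have h1 : (1:ℝ) ≤ (4/δ)*(s - (r - 3*δ/4)) := by
          rw [show (4:ℝ)/δ*(s - (r - 3*δ/4)) = (4*(s - r) + 3*δ)/δ by field_simp; ring]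
          rw [le_div_iff₀ hδ0]
          linarith
        rw [max_eq_left (by linarith), min_eq_right h1]
      have hγzero : ∀ s, s ≤ r + δ/4 → γC s = 0 := by
        intro s hs
        simp only [hγC, ContinuousMap.coe_mk]
        rw [max_eq_right, min_eq_left zero_le_one]
        apply mul_nonpos_of_nonneg_of_nonpos (by positivity)
        linarith
      have hγsupp : ∀ s, γC s ≠ 0 → r + δ/4 < s := by
        intro s hs
        by_contra hcon
        push_neg at hcon
        exact hs (hγzero s hcon)
      have hαsupp : ∀ s, αC s ≠ 0 → r - 3*δ/4 < s := by
        intro s hs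
        by_contra hcon
        push_neg at hcon
        apply hs
        simp only [hαC, ContinuousMap.coe_mk]
        rw [max_eq_right, min_eq_left zero_le_one]
        apply mul_nonpos_of_nonneg_of_nonpos (by positivity)
        linarith
      have hαγ : ∀ s, γC s ≤ αC s := by
        intro s
        simp only [hαC, hγC, ContinuousMap.coe_mk]
        apply min_le_min _ le_rfl
        apply max_le_max _ le_rfl
        apply mul_le_mul_of_nonneg_left _ (by positivity)
        linarith
      -- the three composed functions
      set a : C_c(Z, ℝ) := compCc αC hα0 k with ha
      set c : C_c(Z, ℝ) := compCc γC hγ0 k with hc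
      set b : C_c(Z, ℝ) := compCc (αC - γC) hβ0 k with hb
      -- ρ a = 1
      have hone : qiOpen ρ {x | r - δ/2 < k x} = 1 :=
        one_of_lt_rPos hρs k (by linarith) (by rw [← hr]; linarith)
      have hρa1 : ρ a ≥ 1 := by
        have hle := qiOpen_le_of_one_on hρ (h := a) (V := {x | r - δ/2 < k x})
          (fun x => (hα01 (k x)).1) (fun x => (hα01 (k x)).2)
          (fun x hx => hαone (k x) (le_of_lt hx))
        rw [hone] at hle
        by_contra hcon
        push_neg at hcon
        have := ENNReal.ofReal_lt_one.mpr hcon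
        exact absurd hle (not_le_of_gt this)
      have hρa_le : ρ a ≤ 1 := tau_le_c hρ hρs one_pos
        (fun x => (hα01 (k x)).1) (fun x => (hα01 (k x)).2)
      have hρa : ρ a = 1 := le_antisymm hρa_le hρa1
      -- ρ c = 0
      have hρc : ρ c = 0 := by
        apply tau_eq_zero_of_tsupport_null hρ (O := {x | r + δ/8 < k x})
        · have hsub : Function.support (⇑c) ⊆ {x | r + δ/4 ≤ k x} := by
            intro x hx
            simp only [Function.mem_support, hc, compCc_apply] at hx
            exact le_of_lt (hγsupp (k x) hx)
          refine subset_trans (closure_minimal hsub (isClosed_le continuous_const k.continuous))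
            ?_
          intro x hx
          simp only [mem_setOf_eq] at hx ⊢
          linarith
        · exact null_of_rPos_lt hρ k (by rw [← hr]; linarith)
      -- ρ b = 1
      have hρb : ρ b = 1 := by
        have hsplit := qi_split hρ k a (αC - γC) γC hβ0 hγ0 (fun x => by
          simp only [ha, compCc_apply, ContinuousMap.sub_apply]; ring)
        rw [← hb, ← hc] at hsplit
        rw [← hρa, hsplit, hρc, add_zero]
      -- decompose φ
      set ψ : C(ℝ, ℝ) := φ - (φ r) • (αC - γC) with hψ
      have hψ0 : ψ 0 = 0 := by
        simp only [hψ, ContinuousMap.sub_apply, ContinuousMap.smul_apply, hβ0, hφ,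
          smul_eq_mul, mul_zero, sub_zero]
      have hsplitφ := qi_split hρ k (compCc φ hφ k) ψ ((φ r) • (αC - γC)) hψ0
        (by simp only [ContinuousMap.smul_apply, hβ0, smul_eq_mul, mul_zero])
        (fun x => by
          simp only [compCc_apply, hψ, ContinuousMap.sub_apply, ContinuousMap.smul_apply,
            smul_eq_mul]
          ring)
      have hsmulb : compCc ((φ r) • (αC - γC))
          (by simp only [ContinuousMap.smul_apply, hβ0, smul_eq_mul, mul_zero]) k
          = (φ r) • b := by
        ext x
        simp only [compCc_apply, ContinuousMap.smul_apply, CompactlySupportedContinuousMap.smul_apply, smul_eq_mul, hb]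
      have hφρ : ρ (compCc φ hφ k) = ρ (compCc ψ hψ0 k) + φ r := by
        rw [hsplitφ, hsmulb, hρ.smul, hρb, mul_one]
      -- now bound |ρ (ψ ∘ k)| ≤ ε
      -- ψ is small on [r - δ/2, r + δ/4] and at 0
      have hψsmall_mid : ∀ s, r - δ/2 ≤ s → s ≤ r + δ/4 → |ψ s| ≤ ε := by
        intro s hs1 hs2
        have hβ1 : (αC - γC) s = 1 := by
          simp only [ContinuousMap.sub_apply]
          rw [hαone s hs1, hγzero s hs2, sub_zero]
        simp only [hψ, ContinuousMap.sub_apply, ContinuousMap.smul_apply, hβ1, smul_eq_mul,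
          mul_one]
        have hdist : dist s r < δc := by
          rw [Real.dist_eq, abs_lt]
          constructor <;> linarith
        have := hδc hdist
        rw [Real.dist_eq] at this
        exact this.le
      -- get δ₀ for smallness of ψ near 0
      obtain ⟨δ₀, hδ₀0, hδ₀⟩ := Metric.continuousAt_iff.mp ψ.continuous.continuousAt ε hε
      have hψsmall_zero : ∀ s, |s| < δ₀ → |ψ s| ≤ ε := by
        intro s hs
        have := hδ₀ (by rwa [Real.dist_eq, sub_zero])
        rw [Real.dist_eq, hψ0, sub_zero] at this
        exact this.le
      -- split the unclamped part of ψ into two null-supported parts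
      set ψb : C(ℝ, ℝ) := ψ - cclamp ψ ε with hψb
      have hψb0 : ψb 0 = 0 := by
        simp only [hψb, ContinuousMap.sub_apply, hψ0, cclamp_zero hψ0 hε.le, sub_zero]
      have hψbsmall : ∀ s, |ψ s| ≤ ε → ψb s = 0 := by
        intro s hs
        simp only [hψb, ContinuousMap.sub_apply, cclamp_eq_self hs, sub_self]
      have hcontm : Continuous fun s : ℝ => ψb (min s (r - δ/2)) :=
        ψb.continuous.comp (continuous_id.min continuous_const)
      set ψ₁ : C(ℝ, ℝ) := ⟨fun s => ψb (min s (r - δ/2)), hcontm⟩ with hψ₁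
      have hψ₁0 : ψ₁ 0 = 0 := by
        simp only [hψ₁, ContinuousMap.coe_mk]
        rw [min_eq_left (by linarith), hψb0]
      set ψ₂ : C(ℝ, ℝ) := ψb - ψ₁ with hψ₂
      have hψ₂0 : ψ₂ 0 = 0 := by
        simp only [hψ₂, ContinuousMap.sub_apply, hψb0, hψ₁0, sub_zero]
      -- value of ψb at the point r - δ/2 is 0
      have hψbpt : ψb (r - δ/2) = 0 :=
        hψbsmall _ (hψsmall_mid _ le_rfl (by linarith))
      -- ρ (ψ₁ ∘ k) = 0
      have hρψ₁ : ρ (compCc ψ₁ hψ₁0 k) = 0 := by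
        apply tau_eq_zero_of_tsupport_null hρ
          (O := {x | δ₀/2 < k x} ∩ {x | k x < r - δ/4})
        · have hsub : Function.support (⇑(compCc ψ₁ hψ₁0 k)) ⊆
              {x | δ₀ ≤ k x ∧ k x ≤ r - δ/2} := by
            intro x hx
            simp only [Function.mem_support, compCc_apply, hψ₁, ContinuousMap.coe_mk] at hx
            constructor
            · by_contra hcon
              push_neg at hcon
              apply hx
              apply hψbsmall
              apply hψsmall_zero
              rw [abs_of_nonneg (le_min (hk x) (by linarith))]
              exact lt_of_le_of_lt (min_le_left _ _) hcon
            · by_contra hcon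
              push_neg at hcon
              rw [min_eq_right (by linarith)] at hx
              exact hx hψbpt
          refine subset_trans (closure_minimal hsub ?_) ?_
          · exact IsClosed.inter (isClosed_le continuous_const k.continuous)
              (isClosed_le k.continuous continuous_const)
          · intro x hx
            simp only [mem_setOf_eq, mem_inter_iff] at hx ⊢
            constructor <;> [linarith [hx.1]; linarith [hx.2]]
        · -- this set is null: it is disjoint from {r - δ/4 < k}
          have hOopen : IsOpen ({x | δ₀/2 < k x} ∩ {x | k x < r - δ/4}) :=
            (isOpen_lt continuous_const k.continuous).inter
              (isOpen_lt k.continuous continuous_const)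
          rcases simple_qiOpen01 hρs hOopen with h01 | h01
          · exact h01
          · exfalso
            have hone' : qiOpen ρ {x | r - δ/4 < k x} = 1 :=
              one_of_lt_rPos hρs k (by linarith) (by rw [← hr]; linarith)
            apply not_disjoint_ones hρ hρs _ h01 hone'
            ext x
            simp only [mem_inter_iff, mem_setOf_eq, mem_empty_iff_false, iff_false, not_and]
            intro h1 h2
            linarith [h1.2]
      -- ρ (ψ₂ ∘ k) = 0
      have hρψ₂ : ρ (compCc ψ₂ hψ₂0 k) = 0 := by
        apply tau_eq_zero_of_tsupport_null hρ (O := {x | r + δ/8 < k x})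
        · have hsub : Function.support (⇑(compCc ψ₂ hψ₂0 k)) ⊆ {x | r + δ/4 ≤ k x} := by
            intro x hx
            simp only [Function.mem_support, compCc_apply, hψ₂, ContinuousMap.sub_apply,
              hψ₁, ContinuousMap.coe_mk] at hx
            rcases le_total (k x) (r - δ/2) with hcase | hcase
            · rw [min_eq_left hcase, sub_self] at hx
              exact absurd rfl hx
            · rw [min_eq_right hcase] at hx
              rw [hψbpt, sub_zero] at hx
              by_contra hcon
              simp only [mem_setOf_eq, not_le] at hcon
              exact hx (hψbsmall _ (hψsmall_mid _ hcase (le_of_lt hcon)))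
          refine subset_trans (closure_minimal hsub
            (isClosed_le continuous_const k.continuous)) ?_
          intro x hx
          simp only [mem_setOf_eq] at hx ⊢
          linarith
        · exact null_of_rPos_lt hρ k (by rw [← hr]; linarith)
      -- combine
      have hsplitb := qi_split hρ k (compCc ψb hψb0 k) ψ₁ ψ₂ hψ₁0 hψ₂0 (fun x => by
        simp only [compCc_apply, hψ₂, ContinuousMap.sub_apply]; ring)
      have hρψb : ρ (compCc ψb hψb0 k) = 0 := by
        rw [hsplitb, hρψ₁, hρψ₂, add_zero]
      have hsplitc := qi_split hρ k (compCc ψ hψ0 k) (cclamp ψ ε) ψb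
        (cclamp_zero hψ0 hε.le) hψb0 (fun x => by
          simp only [compCc_apply, hψb, ContinuousMap.sub_apply]; ring)
      have hsmall : |ρ (compCc (cclamp ψ ε) (cclamp_zero hψ0 hε.le) k)| ≤ ε :=
        abs_tau_le hρ hρs hε (fun x => abs_cclamp_le ψ hε.le (k x))
      have : |ρ (compCc ψ hψ0 k)| ≤ ε := by
        rw [hsplitc, hρψb, add_zero]
        exact hsmall
      rw [hφρ]
      simpa using this
  -- conclude equality
  by_contra hne
  have habs : 0 < |ρ (compCc φ hφ k) - φ r| := by
    rw [abs_pos]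
    intro h
    exact hne (by linarith [sub_eq_zero.mp h])
  have := key (|ρ (compCc φ hφ k) - φ r| / 2) (by linarith)
  linarith

end CompS
end QLF
namespace QLF

open Set

section CompGen
variable {Z : Type*} [TopologicalSpace Z] {ρ : C_c(Z, ℝ) → ℝ}

lemma rho_orth (hρ : IsQuasiIntegral ρ) (hρs : IsSimpleQI ρ) (k : C_c(Z, ℝ)) :
    ρ (pPart k) = 0 ∨ ρ (nPart k) = 0 := by
  by_contra hcon
  push_neg at hcon
  obtain ⟨hp, hn⟩ := hcon
  have hp0 : 0 < ρ (pPart k) := lt_of_le_of_ne (hρ.pos _ (pPart_nonneg k)) (Ne.symm hp)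
  have hn0 : 0 < ρ (nPart k) := lt_of_le_of_ne (hρ.pos _ (nPart_nonneg k)) (Ne.symm hn)
  have hpr : ρ (pPart k) = rPos ρ (pPart k) := tau_eq_rPos hρ hρs _ (pPart_nonneg k)
  have hnr : ρ (nPart k) = rPos ρ (nPart k) := tau_eq_rPos hρ hρs _ (nPart_nonneg k)
  set t := ρ (pPart k) / 2 with ht
  set t' := ρ (nPart k) / 2 with ht'
  have h1 : qiOpen ρ {x | t < pPart k x} = 1 :=
    one_of_lt_rPos hρs _ (by simp only [ht]; linarith) (by rw [← hpr]; simp only [ht]; linarith)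
  have h2 : qiOpen ρ {x | t' < nPart k x} = 1 :=
    one_of_lt_rPos hρs _ (by simp only [ht']; linarith) (by rw [← hnr]; simp only [ht']; linarith)
  apply not_disjoint_ones hρ hρs _ h1 h2
  ext x
  simp only [mem_inter_iff, mem_setOf_eq, mem_empty_iff_false, iff_false, not_and,
    pPart_apply, nPart_apply]
  intro ha hb
  rcases le_total (k x) 0 with hx | hx
  · rw [max_eq_right hx] at ha; simp only [ht] at ha; linarith
  · rw [max_eq_right (by linarith)] at hb; simp only [ht'] at hb; linarith

/-- (S): a simple quasi-integral satisfies `ρ (φ ∘ k) = φ (ρ k)`. -/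
lemma rho_comp (hρ : IsQuasiIntegral ρ) (hρs : IsSimpleQI ρ) (k : C_c(Z, ℝ))
    (φ : C(ℝ, ℝ)) (hφ : φ 0 = 0) :
    ρ (compCc φ hφ k) = φ (ρ k) := by
  set φp : C(ℝ, ℝ) := φ.comp cpos with hφp
  set cmin0 : C(ℝ, ℝ) := ⟨fun s => min s 0, continuous_id.min continuous_const⟩ with hcmin0
  set φn : C(ℝ, ℝ) := φ.comp cmin0 with hφn
  have hφp0 : φp 0 = 0 := by
    simp only [hφp, ContinuousMap.comp_apply, cpos_apply, max_self, hφ]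
  have hφn0 : φn 0 = 0 := by
    simp only [hφn, ContinuousMap.comp_apply, hcmin0, ContinuousMap.coe_mk, min_self, hφ]
  have hsplit := qi_split hρ k (compCc φ hφ k) φp φn hφp0 hφn0 (fun x => by
    simp only [compCc_apply, hφp, hφn, ContinuousMap.comp_apply, cpos_apply, hcmin0,
      ContinuousMap.coe_mk]
    rcases le_total (k x) 0 with hx | hx
    · rw [max_eq_right hx, min_eq_left hx, hφ]; ring
    · rw [max_eq_left hx, min_eq_right hx, hφ]; ring)
  have he1 : compCc φp hφp0 k = compCc φ hφ (pPart k) := by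
    ext x; rfl
  have he2 : compCc φn hφn0 k = compCc (φ.comp ⟨fun s => -s, continuous_neg⟩)
      (by simp only [ContinuousMap.comp_apply, ContinuousMap.coe_mk, neg_zero, hφ]) (nPart k) := by
    ext x
    simp only [compCc_apply, hφn, ContinuousMap.comp_apply, hcmin0, ContinuousMap.coe_mk,
      nPart_apply]
    congr 1
    rcases le_total (k x) 0 with hx | hx
    · rw [min_eq_left hx, max_eq_left (by linarith)]; ring
    · rw [min_eq_right hx, max_eq_right (by linarith)]; ring
  have hv1 : ρ (compCc φp hφp0 k) = φ (ρ (pPart k)) := by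
    rw [he1]
    exact rho_comp_nonneg hρ hρs (pPart k) (pPart_nonneg k) φ hφ
  have hv2 : ρ (compCc φn hφn0 k) = φ (- ρ (nPart k)) := by
    rw [he2]
    rw [rho_comp_nonneg hρ hρs (nPart k) (nPart_nonneg k) _ _]
    simp only [ContinuousMap.comp_apply, ContinuousMap.coe_mk]
  have hpn := qi_posneg hρ k
  rcases rho_orth hρ hρs k with h0 | h0
  · rw [hsplit, hv1, hv2, h0, hφ]
    rw [h0] at hpn
    rw [show ρ k = -ρ (nPart k) by linarith]
    ring
  · rw [hsplit, hv1, hv2, h0, neg_zero, hφ]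
    rw [h0] at hpn
    rw [show ρ k = ρ (pPart k) by linarith]
    ring

end CompGen
end QLF
namespace QLF

open Set

section Urysohn
variable {Z : Type*} [TopologicalSpace Z] [T2Space Z] [LocallyCompactSpace Z]

/-- Urysohn-type: a compactly supported `[0,1]`-function which is `1` on a compact `C`,
supported inside an open `V ⊇ C`. -/
lemma exists_one_on {C V : Set Z} (hC : IsCompact C) (hV : IsOpen V) (hCV : C ⊆ V) :
    ∃ e : C_c(Z, ℝ), (∀ x, 0 ≤ e x ∧ e x ≤ 1) ∧ (∀ x ∈ C, e x = 1) ∧ tsupport e ⊆ V := by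
  obtain ⟨L, hLcomp, hCL, hLV⟩ := exists_compact_between hC hV hCV
  obtain ⟨g, hg1, hg0, hgcs, hg01⟩ := exists_continuous_one_zero_of_isCompact hC
    (isClosed_compl_iff.mpr isOpen_interior)
    (Set.disjoint_left.mpr fun x hx hx2 => hx2 (hCL hx))
  refine ⟨⟨g, hgcs⟩, fun x => ⟨(hg01 x).1, (hg01 x).2⟩, fun x hx => hg1 hx, ?_⟩
  have h1 : Function.support g ⊆ interior L := by
    intro x hx
    by_contra hcon
    exact hx (hg0 hcon)
  exact subset_trans (closure_mono h1)
    (subset_trans (closure_minimal interior_subset hLcomp.isClosed) hLV)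

end Urysohn

section Lip
variable {Z : Type*} [TopologicalSpace Z] {ρ : C_c(Z, ℝ) → ℝ}

lemma pPart_neg (u : C_c(Z, ℝ)) : pPart (-u) = nPart u := by
  ext x
  simp only [pPart_apply, nPart_apply, coe_neg, Pi.neg_apply]

/-- Lipschitz estimate for simple quasi-integrals. -/
lemma rho_lipschitz (hρ : IsQuasiIntegral ρ) (hρs : IsSimpleQI ρ) {u v e₀ : C_c(Z, ℝ)}
    (he0 : ∀ x, 0 ≤ e₀ x) (he1 : ∀ x, e₀ x ≤ 1)
    (hsup : ∀ x, (u x ≠ 0 ∨ v x ≠ 0) → e₀ x = 1) {c : ℝ} (hc : 0 ≤ c)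
    (hcb : ∀ x, |u x - v x| ≤ c) : |ρ u - ρ v| ≤ 2 * c := by
  have he₀le : ρ e₀ ≤ 1 := tau_le_c hρ hρs one_pos he0 he1
  have he₀0 : 0 ≤ ρ e₀ := hρ.pos _ he0
  have key : ∀ u' v' : C_c(Z, ℝ), (∀ x, (u' x ≠ 0 ∨ v' x ≠ 0) → e₀ x = 1) →
      (∀ x, u' x - v' x ≤ c) → ρ (pPart u') ≤ ρ (pPart v') + c * ρ e₀ := by
    intro u' v' hs hb
    have hflat : ρ (pPart v' + c • e₀) = ρ (pPart v') + c * ρ e₀ :=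
      add_flat hρ hc (pPart_nonneg v') he0 he1 (fun x hx => by
        apply hs x
        right
        intro h0
        rw [pPart_apply, h0, max_self] at hx
        exact lt_irrefl _ hx)
    have hmono : ρ (pPart u') ≤ ρ (pPart v' + c • e₀) := by
      apply rho_mono hρ hρs (pPart_nonneg u')
      · intro x
        simp only [coe_add, Pi.add_apply, CompactlySupportedContinuousMap.smul_apply, smul_eq_mul]
        have := pPart_nonneg v' x
        have := he0 x
        nlinarith
      · intro x
        simp only [coe_add, Pi.add_apply, CompactlySupportedContinuousMap.smul_apply, smul_eq_mul, pPart_apply]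
        rcases le_total (u' x) 0 with hx | hx
        · rw [max_eq_right hx]
          have := pPart_nonneg v' x
          rw [pPart_apply] at this
          have := he0 x
          nlinarith
        · rcases eq_or_lt_of_le hx with hx0 | hx0
          · rw [max_eq_left hx, ← hx0]
            have h1 := pPart_nonneg v' x
            rw [pPart_apply] at h1
            have := he0 x
            nlinarith
          · have he1x : e₀ x = 1 := hs x (Or.inl (by intro h; rw [h] at hx0; exact lt_irrefl _ hx0))
            rw [max_eq_left hx, he1x, mul_one]
            have := hb x
            calc u' x ≤ v' x + c := by linarith
            _ ≤ max (v' x) 0 + c := by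
                have := le_max_left (v' x) (0:ℝ); linarith
    linarith [hmono, hflat.symm.le, hflat.le]
  have k1 := key u v (fun x h => hsup x h) (fun x => (abs_le.mp (hcb x)).2.trans (by linarith))
  have k2 := key v u (fun x h => hsup x h.symm)
    (fun x => by have := (abs_le.mp (hcb x)).1; linarith)
  have k3 := key (-u) (-v) (fun x h => hsup x (by
      rcases h with h | h
      · exact Or.inl (by simpa [coe_neg] using h)
      · exact Or.inr (by simpa [coe_neg] using h)))
    (fun x => by
      simp only [coe_neg, Pi.neg_apply]
      have := (abs_le.mp (hcb x)).1
      linarith)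
  have k4 := key (-v) (-u) (fun x h => hsup x (by
      rcases h with h | h
      · exact Or.inr (by simpa [coe_neg] using h)
      · exact Or.inl (by simpa [coe_neg] using h)))
    (fun x => by
      simp only [coe_neg, Pi.neg_apply]
      have := (abs_le.mp (hcb x)).2
      linarith)
  rw [pPart_neg, pPart_neg] at k3 k4
  have hu := qi_posneg hρ u
  have hv := qi_posneg hρ v
  have hcc : c * ρ e₀ ≤ c * 1 := mul_le_mul_of_nonneg_left he₀le hc
  rw [abs_le]
  constructor <;> nlinarith

end Lip
end QLF
namespace QLF

open Set

section Fiber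
variable {X Y : Type*} [TopologicalSpace X] [TopologicalSpace Y] [T2Space X] [T2Space Y]
  {ρ : C_c(X, ℝ) → ℝ}

lemma fiberY_apply (f : C_c(X × Y, ℝ)) (y : Y) (x : X) : fiberY f y x = f (x, y) := rfl

lemma tsupport_fiberY_subset (f : C_c(X × Y, ℝ)) (y : Y) :
    tsupport (fiberY f y) ⊆ {x | (x, y) ∈ tsupport f} := by
  apply closure_minimal
  · intro x hx
    simp only [Function.mem_support, fiberY_apply] at hx
    exact subset_closure (Function.mem_support.2 hx)
  · exact IsClosed.preimage (continuous_id.prodMk continuous_const) (isClosed_tsupport _)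

lemma fiberY_smul (a : ℝ) (f : C_c(X × Y, ℝ)) (y : Y) :
    fiberY (a • f) y = a • fiberY f y := by
  ext x
  simp only [fiberY_apply, CompactlySupportedContinuousMap.smul_apply, smul_eq_mul]

lemma fiberY_add (f g : C_c(X × Y, ℝ)) (y : Y) :
    fiberY (f + g) y = fiberY f y + fiberY g y := by
  ext x
  simp only [fiberY_apply, coe_add, Pi.add_apply]

lemma fiberY_zero (y : Y) : fiberY (0 : C_c(X × Y, ℝ)) y = 0 := by
  ext x
  simp only [fiberY_apply, coe_zero, Pi.zero_apply]

lemma tmap_hcs (hρ : IsQuasiIntegral ρ) (f : C_c(X × Y, ℝ)) :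
    HasCompactSupport (Tmap ρ f) := by
  apply HasCompactSupport.intro (f.hasCompactSupport'.image continuous_snd)
  intro y hy
  show ρ (fiberY f y) = 0
  have hzero : fiberY f y = 0 := by
    ext x
    by_contra hx
    exact hy ⟨(x, y), subset_tsupport _ hx, rfl⟩
  rw [hzero, qi_zero hρ]

variable [LocallyCompactSpace X]

lemma tmap_continuous (hρ : IsQuasiIntegral ρ) (hρs : IsSimpleQI ρ) (f : C_c(X × Y, ℝ)) :
    Continuous (Tmap ρ f) := by
  set Kx : Set X := Prod.fst '' tsupport f with hKx
  have hKxc : IsCompact Kx := f.hasCompactSupport'.image continuous_fst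
  obtain ⟨e₀, he01, heC, -⟩ := exists_one_on hKxc isOpen_univ (subset_univ _)
  have hmem : ∀ (x : X) (y : Y), f (x, y) ≠ 0 → x ∈ Kx := by
    intro x y hxy
    exact ⟨(x, y), subset_tsupport _ hxy, rfl⟩
  rw [continuous_iff_continuousAt]
  intro y₀
  rw [ContinuousAt, Metric.tendsto_nhds]
  intro ε hε
  set F : X × Y → ℝ := fun p => f p - f (p.1, y₀) with hF
  have hFcont : Continuous F :=
    f.continuous.sub (f.continuous.comp (continuous_fst.prodMk continuous_const))
  set D : Set (X × Y) := {p | |F p| < ε/3} with hD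
  have hDopen : IsOpen D := isOpen_lt (continuous_abs.comp hFcont) continuous_const
  have hsub : Kx ×ˢ ({y₀} : Set Y) ⊆ D := by
    rintro ⟨x, y⟩ ⟨-, hy⟩
    simp only [mem_singleton_iff] at hy
    simp only [hD, mem_setOf_eq, hF, hy, sub_self, abs_zero]
    linarith
  obtain ⟨u, v, huo, hvo, hKu, hyv, huv⟩ :=
    generalized_tube_lemma hKxc isCompact_singleton hDopen hsub
  have hyv' : y₀ ∈ v := hyv rfl
  filter_upwards [hvo.mem_nhds hyv'] with y hy
  have hb : ∀ x, |fiberY f y x - fiberY f y₀ x| ≤ ε/3 := by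
    intro x
    by_cases hx : x ∈ Kx
    · have : (x, y) ∈ D := huv ⟨hKu hx, hy⟩
      simp only [hD, mem_setOf_eq, hF] at this
      exact le_of_lt this
    · have h1 : f (x, y) = 0 := by
        by_contra h
        exact hx (hmem x y h)
      have h2 : f (x, y₀) = 0 := by
        by_contra h
        exact hx (hmem x y₀ h)
      simp only [fiberY_apply, h1, h2, sub_zero, abs_zero]
      linarith
  have hlip := rho_lipschitz hρ hρs (u := fiberY f y) (v := fiberY f y₀) (e₀ := e₀)
    (fun x => (he01 x).1) (fun x => (he01 x).2)
    (fun x hx => by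
      apply heC
      rcases hx with hx | hx
      · exact hmem x y hx
      · exact hmem x y₀ hx)
    (by linarith : (0:ℝ) ≤ ε/3) hb
  have : |Tmap ρ f y - Tmap ρ f y₀| ≤ 2 * (ε/3) := hlip
  rw [Real.dist_eq]
  calc |Tmap ρ f y - Tmap ρ f y₀| ≤ 2 * (ε/3) := this
  _ < ε := by linarith

lemma TCc_apply (hρ : IsQuasiIntegral ρ) (hρs : IsSimpleQI ρ) (f : C_c(X × Y, ℝ)) (y : Y) :
    TCc ρ f y = ρ (fiberY f y) := by
  unfold TCc
  rw [dif_pos ⟨tmap_continuous hρ hρs f, tmap_hcs hρ f⟩]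
  rfl

lemma TCc_nonneg (hρ : IsQuasiIntegral ρ) (hρs : IsSimpleQI ρ) {f : C_c(X × Y, ℝ)}
    (hf : ∀ p, 0 ≤ f p) (y : Y) : 0 ≤ TCc ρ f y := by
  rw [TCc_apply hρ hρs]
  exact hρ.pos _ (fun x => hf (x, y))

end Fiber
end QLF
namespace QLF

open Set

section Prod1
variable {X Y : Type*} [TopologicalSpace X] [LocallyCompactSpace X] [T2Space X]
  [TopologicalSpace Y] [T2Space Y]
  {ρ : C_c(X, ℝ) → ℝ} {η : C_c(Y, ℝ) → ℝ}

lemma TCc_smul (hρ : IsQuasiIntegral ρ) (hρs : IsSimpleQI ρ) (a : ℝ) (f : C_c(X × Y, ℝ)) :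
    TCc ρ (a • f) = a • TCc ρ f := by
  ext y
  rw [CompactlySupportedContinuousMap.smul_apply, TCc_apply hρ hρs, TCc_apply hρ hρs, fiberY_smul, hρ.smul]
  rfl

/-- Part 1: `η × ρ` is a quasi-integral when `ρ` is simple. -/
theorem prod_is_qi (hρ : IsQuasiIntegral ρ) (hη : IsQuasiIntegral η) (hρs : IsSimpleQI ρ) :
    IsQuasiIntegral (prodQI η ρ) := by
  constructor
  · intro a f
    show η (TCc ρ (a • f)) = a * η (TCc ρ f)
    rw [TCc_smul hρ hρs, hη.smul]
  · intro f g h hg hh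
    obtain ⟨φ, hφ0, hgx⟩ := hg
    obtain ⟨ψ, hψ0, hhx⟩ := hh
    have hTg : ∀ y, TCc ρ g y = φ (TCc ρ f y) := by
      intro y
      rw [TCc_apply hρ hρs, TCc_apply hρ hρs]
      have hfib : fiberY g y = compCc φ hφ0 (fiberY f y) := by
        ext x
        simp only [fiberY_apply, compCc_apply]
        exact hgx (x, y)
      rw [hfib, rho_comp hρ hρs]
    have hTh : ∀ y, TCc ρ h y = ψ (TCc ρ f y) := by
      intro y
      rw [TCc_apply hρ hρs, TCc_apply hρ hρs]
      have hfib : fiberY h y = compCc ψ hψ0 (fiberY f y) := by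
        ext x
        simp only [fiberY_apply, compCc_apply]
        exact hhx (x, y)
      rw [hfib, rho_comp hρ hρs]
    have hTsum : TCc ρ (g + h) = TCc ρ g + TCc ρ h := by
      ext y
      rw [coe_add, Pi.add_apply, TCc_apply hρ hρs, TCc_apply hρ hρs, TCc_apply hρ hρs,
        fiberY_add]
      exact hρ.add (fiberY f y) (fiberY g y) (fiberY h y)
        ⟨φ, hφ0, fun x => hgx (x, y)⟩ ⟨ψ, hψ0, fun x => hhx (x, y)⟩
    show η (TCc ρ (g + h)) = η (TCc ρ g) + η (TCc ρ h)
    rw [hTsum]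
    exact hη.add (TCc ρ f) _ _ ⟨φ, hφ0, hTg⟩ ⟨ψ, hψ0, hTh⟩
  · intro f hf
    exact hη.pos _ (TCc_nonneg hρ hρs hf)

end Prod1
end QLF
namespace QLF

open Set

section OpenCase
variable {X Y : Type*} [TopologicalSpace X] [LocallyCompactSpace X] [T2Space X]
  [TopologicalSpace Y] [LocallyCompactSpace Y] [T2Space Y]
  {ρ : C_c(X, ℝ) → ℝ} {η : C_c(Y, ℝ) → ℝ}

lemma nu_finite_nbhd (hνcf : ∀ K : Set Y, IsCompact K → qiMeas η K ≠ ∞)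
    {C : Set Y} (hC : IsCompact C) :
    ∃ V : Set Y, IsOpen V ∧ C ⊆ V ∧ qiOpen η V ≠ ∞ := by
  obtain ⟨L, hL, hCL⟩ := exists_compact_superset hC
  refine ⟨interior L, isOpen_interior, hCL, ?_⟩
  have hle : qiOpen η (interior L) ≤ qiMeas η L := by
    rw [qiMeas_eq_iInf]
    exact le_iInf₂ fun V hV => qiOpen_mono η (interior_subset.trans hV.2)
  exact ne_top_of_le_ne_top (hνcf L hL) hle

lemma isOpen_sectionY {U : Set (X × Y)} (hU : IsOpen U) (y : Y) :
    IsOpen {x : X | (x, y) ∈ U} :=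
  hU.preimage (continuous_id.prodMk continuous_const)

/-- Part 2, openness of `W`. -/
theorem W_isOpen (hρ : IsQuasiIntegral ρ) (hρs : IsSimpleQI ρ)
    {U : Set (X × Y)} (hU : IsOpen U) :
    IsOpen {y : Y | qiMeas ρ {x : X | (x, y) ∈ U} = 1} := by
  rw [isOpen_iff_mem_nhds]
  intro y₀ hy₀
  simp only [mem_setOf_eq] at hy₀
  rw [qiMeas_of_isOpen _ (isOpen_sectionY hU y₀)] at hy₀
  have hlt : (0 : ℝ≥0∞) < qiOpen ρ {x : X | (x, y₀) ∈ U} := by rw [hy₀]; norm_num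
  obtain ⟨h, hb, hs, hv⟩ := exists_fun_of_lt_qiOpen hlt
  have hρh : 0 < ρ h := by
    rw [← ENNReal.ofReal_pos]
    exact hv
  have hsub : tsupport h ×ˢ ({y₀} : Set Y) ⊆ U := by
    rintro ⟨x, y⟩ ⟨hx, hy⟩
    simp only [mem_singleton_iff] at hy
    subst hy
    exact hs hx
  obtain ⟨u, v, huo, hvo, hKu, hyv, huv⟩ :=
    generalized_tube_lemma h.hasCompactSupport' isCompact_singleton hU hsub
  rw [mem_nhds_iff]
  refine ⟨v, ?_, hvo, hyv rfl⟩
  intro y hy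
  simp only [mem_setOf_eq]
  have hsupy : tsupport h ⊆ {x : X | (x, y) ∈ U} := by
    intro x hx
    exact huv ⟨hKu hx, hy⟩
  have hge : ENNReal.ofReal (ρ h) ≤ qiOpen ρ {x : X | (x, y) ∈ U} := le_qiOpen ρ hb hsupy
  have hne : qiOpen ρ {x : X | (x, y) ∈ U} ≠ 0 := by
    intro h0
    rw [h0, nonpos_iff_eq_zero, ENNReal.ofReal_eq_zero] at hge
    linarith
  rw [qiMeas_of_isOpen _ (isOpen_sectionY hU y)]
  rcases simple_qiOpen01 hρs (isOpen_sectionY hU y) with h0 | h1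
  · exact absurd h0 hne
  · exact h1

/-- Part 2, `≤` direction. -/
lemma prod_open_le (hρ : IsQuasiIntegral ρ) (hη : IsQuasiIntegral η) (hρs : IsSimpleQI ρ)
    (hνcf : ∀ K : Set Y, IsCompact K → qiMeas η K ≠ ∞)
    {U : Set (X × Y)} (hU : IsOpen U) {f : C_c(X × Y, ℝ)}
    (hf1 : ∀ p, 0 ≤ f p ∧ f p ≤ 1) (hf2 : tsupport f ⊆ U) :
    ENNReal.ofReal (η (TCc ρ f)) ≤ qiOpen η {y : Y | qiMeas ρ {x : X | (x, y) ∈ U} = 1} := by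
  set W := {y : Y | qiMeas ρ {x : X | (x, y) ∈ U} = 1} with hWdef
  set v : C_c(Y, ℝ) := TCc ρ f with hv
  have hv0 : ∀ y, 0 ≤ v y := TCc_nonneg hρ hρs (fun p => (hf1 p).1)
  have hv1 : ∀ y, v y ≤ 1 := by
    intro y
    rw [hv, TCc_apply hρ hρs]
    exact tau_le_c hρ hρs one_pos (fun x => (hf1 (x, y)).1) (fun x => (hf1 (x, y)).2)
  have hvW : ∀ y, v y ≠ 0 → y ∈ W := by
    intro y hvy
    by_contra hyW
    apply hvy
    rw [hv, TCc_apply hρ hρs]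
    have h01 := hρs {x : X | (x, y) ∈ U} (Or.inl (isOpen_sectionY hU y))
    have h0 : qiMeas ρ {x : X | (x, y) ∈ U} = 0 := by
      rcases h01 with h | h
      · exact h
      · exact absurd h hyW
    rw [qiMeas_of_isOpen _ (isOpen_sectionY hU y)] at h0
    apply tau_eq_zero_of_tsupport_null hρ (O := {x : X | (x, y) ∈ U}) _ h0
    refine (tsupport_fiberY_subset f y).trans ?_
    intro x hx
    exact hf2 hx
  by_cases hWtop : qiOpen η W = ∞
  · rw [hWtop]; exact le_top
  obtain ⟨V₀, hV₀o, hV₀s, hV₀f⟩ := nu_finite_nbhd hνcf v.hasCompactSupport'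
  set A := (qiOpen η V₀).toReal with hA
  set B := (qiOpen η W).toReal with hB
  have hA0 : 0 ≤ A := ENNReal.toReal_nonneg
  have key : ∀ n : ℕ, 0 < n → η v ≤ (1 / n) * A + B := by
    intro n hn
    have htn : (0:ℝ) < 1 / n := by positivity
    have hsplit := qi_split_min hη v htn.le
    have hmin : η (compCc (cmin (1/n)) (cmin_zero htn.le) v) ≤ (1/n) * A := by
      apply tau_le_mul_toReal hη htn
      · intro y; simp only [compCc_apply, cmin_apply]; exact le_min (hv0 y) htn.le
      · intro y; simp only [compCc_apply, cmin_apply]; exact min_le_right _ _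
      · exact tsupport_compCc_subset.trans hV₀s
      · exact hV₀f
    have hrest : η (compCc (crest (1/n)) (crest_zero htn.le) v) ≤ 1 * B := by
      apply tau_le_mul_toReal hη one_pos
      · intro y; simp only [compCc_apply, crest_apply]; exact le_max_right _ _
      · intro y
        simp only [compCc_apply, crest_apply]
        refine max_le ?_ zero_le_one
        have := hv1 y
        linarith
      · have hsub : Function.support (⇑(compCc (crest (1/n)) (crest_zero htn.le) v)) ⊆
            {y | 1/n ≤ v y} := by
          intro y hy
          simp only [Function.mem_support, compCc_apply, crest_apply] at hy
          by_contra hcon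
          simp only [mem_setOf_eq, not_le] at hcon
          exact hy (max_eq_right (by linarith))
        refine subset_trans (closure_minimal hsub
          (isClosed_le continuous_const v.continuous)) ?_
        intro y hy
        simp only [mem_setOf_eq] at hy
        apply hvW
        intro h0
        rw [h0] at hy
        exact absurd hy (by simp only [not_le]; positivity)
      · exact hWtop
    rw [hsplit]
    linarith
  have hfin : η v ≤ B := by
    by_contra hcon
    push_neg at hcon
    set d := η v - B with hd
    have hd0 : 0 < d := by simp only [hd]; linarith
    obtain ⟨n, hn⟩ := exists_nat_gt (A / d)
    have hn0 : 0 < n := by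
      by_contra hn0
      push_neg at hn0
      interval_cases n
      simp only [Nat.cast_zero] at hn
      have : 0 ≤ A / d := div_nonneg hA0 hd0.le
      linarith
    have hkey := key n hn0
    have hnn : (0:ℝ) < n := by exact_mod_cast hn0
    have : A / d < n := hn
    have h2 : A / n < d := by
      rw [div_lt_iff₀ hnn] at *
      rw [div_lt_iff₀ hd0] at this
      nlinarith
    have h3 : (1 / n : ℝ) * A = A / n := by ring
    rw [h3] at hkey
    simp only [hd] at h2
    linarith
  calc ENNReal.ofReal (η v) ≤ ENNReal.ofReal B := ENNReal.ofReal_le_ofReal hfin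
  _ = qiOpen η W := by rw [hB, ENNReal.ofReal_toReal hWtop]

end OpenCase
end QLF
namespace QLF

open Set

section OpenGe
variable {X Y : Type*} [TopologicalSpace X] [LocallyCompactSpace X] [T2Space X]
  [TopologicalSpace Y] [LocallyCompactSpace Y] [T2Space Y]
  {ρ : C_c(X, ℝ) → ℝ} {η : C_c(Y, ℝ) → ℝ}

/-- Part 2, `≥` direction: the key construction. -/
lemma prod_open_ge_claim (hρ : IsQuasiIntegral ρ) (hη : IsQuasiIntegral η)
    (hρs : IsSimpleQI ρ) {U : Set (X × Y)} (hU : IsOpen U) {g : C_c(Y, ℝ)}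
    (hg1 : ∀ y, 0 ≤ g y ∧ g y ≤ 1)
    (hg2 : tsupport g ⊆ {y : Y | qiMeas ρ {x : X | (x, y) ∈ U} = 1})
    {ε : ℝ} (hε0 : 0 < ε) (hε1 : ε < 1) :
    ∃ f : C_c(X × Y, ℝ), (∀ p, 0 ≤ f p ∧ f p ≤ 1) ∧ tsupport f ⊆ U ∧
      (1 - ε) * η g ≤ η (TCc ρ f) := by
  classical
  set K := tsupport g with hKdef
  have hKc : IsCompact K := g.hasCompactSupport'
  have step1 : ∀ y : Y, y ∈ K → ∃ hN : C_c(X, ℝ) × Set Y,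
      (∀ x, 0 ≤ hN.1 x ∧ hN.1 x ≤ 1) ∧ IsOpen hN.2 ∧ y ∈ hN.2 ∧
      (tsupport hN.1 ×ˢ hN.2 ⊆ U) ∧ 1 - ε < ρ hN.1 := by
    intro y hy
    have h1 : qiOpen ρ {x : X | (x, y) ∈ U} = 1 := by
      have := hg2 hy
      simp only [mem_setOf_eq] at this
      rwa [qiMeas_of_isOpen _ (isOpen_sectionY hU y)] at this
    have hlt : ENNReal.ofReal (1 - ε) < qiOpen ρ {x : X | (x, y) ∈ U} := by
      rw [h1]
      exact ENNReal.ofReal_lt_one.mpr (by linarith)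
    obtain ⟨h, hb, hs, hv⟩ := exists_fun_of_lt_qiOpen hlt
    have hρh : 1 - ε < ρ h := by
      by_contra hcon
      push_neg at hcon
      exact absurd hv (not_lt_of_ge (ENNReal.ofReal_le_ofReal hcon))
    have hsub : tsupport h ×ˢ ({y} : Set Y) ⊆ U := by
      rintro ⟨x, y'⟩ ⟨hx, hy'⟩
      simp only [mem_singleton_iff] at hy'
      subst hy'
      exact hs hx
    obtain ⟨u, v, huo, hvo, hKu, hyv, huv⟩ :=
      generalized_tube_lemma h.hasCompactSupport' isCompact_singleton hU hsub
    refine ⟨(h, v), hb, hvo, hyv rfl, ?_, hρh⟩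
    rintro ⟨x, y'⟩ ⟨hx, hy'⟩
    exact huv ⟨hKu hx, hy'⟩
  choose! F hF1 hF2 hF3 hF4 hF5 using step1
  have hcov : K ⊆ ⋃ y ∈ K, (F y).2 := fun y hy => mem_biUnion hy (hF3 y hy)
  obtain ⟨b', hb'K, hb'fin, hb'cov⟩ :=
    hKc.elim_finite_subcover_image (fun y hy => hF2 y hy) hcov
  set t : Finset Y := hb'fin.toFinset with htdef
  have htK : ∀ i ∈ t, i ∈ K := by
    intro i hi
    rw [htdef, Set.Finite.mem_toFinset] at hi
    exact hb'K hi
  have htcov : K ⊆ ⋃ i ∈ t, (F i).2 := by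
    intro y hy
    have := hb'cov hy
    simp only [mem_iUnion, exists_prop] at this ⊢
    obtain ⟨i, hi1, hi2⟩ := this
    exact ⟨i, by rw [htdef, Set.Finite.mem_toFinset]; exact hi1, hi2⟩
  obtain ⟨C, hCcomp, hCN, hCcov⟩ := hKc.finite_compact_cover t (fun i => (F i).2)
    (fun i hi => hF2 i (htK i hi)) htcov
  have hury : ∀ y : Y, y ∈ t → ∃ α : C_c(Y, ℝ),
      (∀ z, 0 ≤ α z ∧ α z ≤ 1) ∧ (∀ z ∈ C y, α z = 1) ∧ tsupport α ⊆ (F y).2 :=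
    fun y hy => exists_one_on (hCcomp y) (hF2 y (htK y hy)) (hCN y)
  choose! α hα1 hα2 hα3 using hury
  -- the function S
  set S : C(X × Y, ℝ) := ∑ i ∈ t,
    (⟨fun p => min ((F i).1 p.1) ((α i) p.2),
      (((F i).1.continuous.comp continuous_fst).min
        ((α i).continuous.comp continuous_snd))⟩ : C(X × Y, ℝ)) with hSdef
  have hSapp : ∀ p : X × Y, S p = ∑ i ∈ t, min ((F i).1 p.1) ((α i) p.2) := by
    intro p
    rw [hSdef]
    rw [ContinuousMap.coe_sum]
    simp only [Finset.sum_apply, ContinuousMap.coe_mk]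
  have htermnn : ∀ (i : Y), i ∈ t → ∀ p : X × Y, 0 ≤ min ((F i).1 p.1) ((α i) p.2) :=
    fun i hi p => le_min (hF1 i (htK i hi) p.1).1 (hα1 i hi p.2).1
  have hS0 : ∀ p, 0 ≤ S p := by
    intro p
    rw [hSapp]
    exact Finset.sum_nonneg (fun i hi => htermnn i hi p)
  -- support control
  set bigU : Set (X × Y) := ⋃ i ∈ t, (tsupport ((F i).1) ×ˢ tsupport (α i)) with hbigU
  have hbigUcomp : IsCompact bigU :=
    t.finite_toSet.isCompact_biUnion
      (fun i _ => ((F i).1.hasCompactSupport').prod ((α i).hasCompactSupport'))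
  have hbigUclosed : IsClosed bigU :=
    t.finite_toSet.isClosed_biUnion
      (fun i _ => (isClosed_tsupport _).prod (isClosed_tsupport _))
  have hSsupp : ∀ p : X × Y, p ∉ bigU → S p = 0 := by
    intro p hp
    rw [hSapp]
    apply Finset.sum_eq_zero
    intro i hi
    by_contra hterm
    have hpos : 0 < min ((F i).1 p.1) ((α i) p.2) :=
      lt_of_le_of_ne (htermnn i hi p) (Ne.symm hterm)
    apply hp
    rw [hbigU]
    apply mem_biUnion hi
    constructor
    · apply subset_tsupport
      intro h0
      rw [h0] at hpos
      simp only [lt_min_iff] at hpos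
      exact lt_irrefl _ hpos.1
    · apply subset_tsupport
      intro h0
      rw [h0] at hpos
      simp only [lt_min_iff] at hpos
      exact lt_irrefl _ hpos.2
  set f : C_c(X × Y, ℝ) := ⟨⟨fun p => min (S p) 1, S.continuous.min continuous_const⟩,
    HasCompactSupport.intro hbigUcomp (fun p hp => by
      show min (S p) 1 = 0
      rw [hSsupp p hp]
      simp)⟩ with hfdef
  have hfapp : ∀ p, f p = min (S p) 1 := fun p => rfl
  have hfb : ∀ p, 0 ≤ f p ∧ f p ≤ 1 := by
    intro p
    rw [hfapp]
    exact ⟨le_min (hS0 p) zero_le_one, min_le_right _ _⟩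
  have hfsupp : tsupport f ⊆ U := by
    have h1 : Function.support (⇑f) ⊆ bigU := by
      intro p hp
      simp only [Function.mem_support] at hp
      by_contra hcon
      apply hp
      rw [hfapp, hSsupp p hcon]
      simp
    refine subset_trans (closure_minimal h1 hbigUclosed) ?_
    rw [hbigU]
    intro p hp
    simp only [mem_iUnion, exists_prop] at hp
    obtain ⟨i, hi, hp1, hp2⟩ := hp
    exact hF4 i (htK i hi) ⟨hp1, hα3 i hi hp2⟩
  -- lower bound for T f
  have hTlb : ∀ y : Y, 0 < g y → 1 - ε ≤ TCc ρ f y := by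
    intro y hgy
    have hyK : y ∈ K := subset_tsupport _ (ne_of_gt hgy)
    have hyC : y ∈ ⋃ i ∈ t, C i := by rw [← hCcov]; exact hyK
    simp only [mem_iUnion, exists_prop] at hyC
    obtain ⟨i, hi, hyCi⟩ := hyC
    have hαy : (α i) y = 1 := hα2 i hi y hyCi
    have hptwise : ∀ x, (F i).1 x ≤ fiberY f y x := by
      intro x
      rw [fiberY_apply, hfapp]
      have h1 : min ((F i).1 x) ((α i) y) ≤ S (x, y) := by
        rw [hSapp]
        exact Finset.single_le_sum (fun j hj => htermnn j hj (x, y)) hi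
      rw [hαy] at h1
      rw [min_eq_left (hF1 i (htK i hi) x).2] at h1
      exact le_min h1 (hF1 i (htK i hi) x).2
    have hmono : ρ ((F i).1) ≤ ρ (fiberY f y) :=
      rho_mono hρ hρs (fun x => (hF1 i (htK i hi) x).1)
        (fun x => le_trans (hF1 i (htK i hi) x).1 (hptwise x)) hptwise
    rw [TCc_apply hρ hρs]
    have := hF5 i (htK i hi)
    linarith
  -- conclude via flat monotonicity for η
  have hflat : η ((1 - ε) • g) ≤ η (TCc ρ f) := by
    apply flat_mono' hη (c := 1 - ε) (by linarith)
    · intro y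
      simp only [CompactlySupportedContinuousMap.smul_apply, smul_eq_mul]
      exact mul_nonneg (by linarith) (hg1 y).1
    · intro y
      simp only [CompactlySupportedContinuousMap.smul_apply, smul_eq_mul]
      calc (1 - ε) * g y ≤ (1 - ε) * 1 := by
            apply mul_le_mul_of_nonneg_left (hg1 y).2 (by linarith)
      _ = 1 - ε := mul_one _
    · exact TCc_nonneg hρ hρs (fun p => (hfb p).1)
    · intro y hy
      simp only [CompactlySupportedContinuousMap.smul_apply, smul_eq_mul] at hy
      have hgy : 0 < g y := by
        rcases (hg1 y).1.lt_or_eq with h | h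
        · exact h
        · rw [← h, mul_zero] at hy; exact absurd hy (lt_irrefl 0)
      exact hTlb y hgy
  rw [hη.smul] at hflat
  exact ⟨f, hfb, hfsupp, hflat⟩

end OpenGe
end QLF
namespace QLF

open Set

section OpenEq
variable {X Y : Type*} [TopologicalSpace X] [LocallyCompactSpace X] [T2Space X]
  [TopologicalSpace Y] [LocallyCompactSpace Y] [T2Space Y]
  {ρ : C_c(X, ℝ) → ℝ} {η : C_c(Y, ℝ) → ℝ}

/-- Part 2, the formula on open sets. -/
theorem prod_open_eq (hρ : IsQuasiIntegral ρ) (hη : IsQuasiIntegral η) (hρs : IsSimpleQI ρ)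
    (hνcf : ∀ K : Set Y, IsCompact K → qiMeas η K ≠ ∞)
    {U : Set (X × Y)} (hU : IsOpen U) :
    qiMeas (prodQI η ρ) U = qiMeas η {y : Y | qiMeas ρ {x : X | (x, y) ∈ U} = 1} := by
  have hWo : IsOpen {y : Y | qiMeas ρ {x : X | (x, y) ∈ U} = 1} := W_isOpen hρ hρs hU
  rw [qiMeas_of_isOpen _ hU, qiMeas_of_isOpen _ hWo]
  apply le_antisymm
  · exact iSup₂_le fun f hf => prod_open_le hρ hη hρs hνcf hU (fun p => hf.1 p) hf.2
  · refine iSup₂_le fun g hg => ?_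
    have hηg0 : 0 ≤ η g := hη.pos g (fun y => (hg.1 y).1)
    rcases eq_or_lt_of_le hηg0 with h0 | h0
    · rw [← h0]
      simp
    apply ENNReal.le_of_forall_pos_le_add
    intro ε' hε' _
    set ε : ℝ := min (1/2) ((ε' : ℝ) / (2 * η g)) with hεdef
    have hε'0 : (0:ℝ) < (ε' : ℝ) := hε'
    have hε0 : 0 < ε := by
      apply lt_min (by norm_num)
      positivity
    have hε1 : ε < 1 := lt_of_le_of_lt (min_le_left _ _) (by norm_num)
    obtain ⟨f, hfb, hfsupp, hflb⟩ := prod_open_ge_claim hρ hη hρs hU hg.1 hg.2 hε0 hε1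
    have hεg : ε * η g ≤ (ε' : ℝ) := by
      have h1 : ε ≤ (ε' : ℝ) / (2 * η g) := min_le_right _ _
      have h2 : ε * η g ≤ ((ε' : ℝ) / (2 * η g)) * η g :=
        mul_le_mul_of_nonneg_right h1 hηg0
      have h3 : ((ε' : ℝ) / (2 * η g)) * η g = (ε' : ℝ) / 2 := by
        field_simp
      rw [h3] at h2
      linarith
    calc ENNReal.ofReal (η g) = ENNReal.ofReal ((1 - ε) * η g + ε * η g) := by ring_nf
    _ ≤ ENNReal.ofReal ((1 - ε) * η g) + ENNReal.ofReal (ε * η g) := ENNReal.ofReal_add_le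
    _ ≤ qiOpen (prodQI η ρ) U + ENNReal.ofReal (ε * η g) := by
        gcongr
        refine le_trans (ENNReal.ofReal_le_ofReal hflb) ?_
        exact le_qiOpen (prodQI η ρ) hfb hfsupp
    _ ≤ qiOpen (prodQI η ρ) U + (ε' : ℝ≥0∞) := by
        gcongr
        refine le_trans (ENNReal.ofReal_le_ofReal hεg) ?_
        rw [ENNReal.ofReal_coe_nnreal]

end OpenEq
end QLF
namespace QLF

open Set

section CompactCase
variable {X Y : Type*} [TopologicalSpace X] [LocallyCompactSpace X] [T2Space X]
  [TopologicalSpace Y] [LocallyCompactSpace Y] [T2Space Y]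
  {ρ : C_c(X, ℝ) → ℝ} {η : C_c(Y, ℝ) → ℝ}

lemma fiber_nbhd {K : Set (X × Y)} (hK : IsCompact K) {V : Set X} (hV : IsOpen V)
    {y₀ : Y} (h : {x : X | (x, y₀) ∈ K} ⊆ V) :
    ∃ N : Set Y, IsOpen N ∧ y₀ ∈ N ∧ ∀ y ∈ N, {x : X | (x, y) ∈ K} ⊆ V := by
  set P : Set Y := Prod.snd '' (K ∩ (Vᶜ ×ˢ (univ : Set Y))) with hP
  have hPc : IsCompact P := by
    apply IsCompact.image _ continuous_snd
    exact hK.inter_right ((hV.isClosed_compl).prod isClosed_univ)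
  refine ⟨Pᶜ, hPc.isClosed.isOpen_compl, ?_, ?_⟩
  · intro hy₀
    rw [hP] at hy₀
    obtain ⟨⟨x, y⟩, ⟨hpK, hpV, -⟩, hpy⟩ := hy₀
    simp only at hpy
    subst hpy
    exact hpV (h hpK)
  · intro y hy x hx
    by_contra hxV
    exact hy ⟨(x, y), ⟨hx, hxV, trivial⟩, rfl⟩

lemma isClosed_sectionY {K : Set (X × Y)} (hK : IsCompact K) (y : Y) :
    IsClosed {x : X | (x, y) ∈ K} :=
  hK.isClosed.preimage (continuous_id.prodMk continuous_const)

lemma exists_null_open_of_lt (hρs : IsSimpleQI ρ) {A : Set X}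
    (h : (⨅ (U : Set X) (_ : IsOpen U ∧ A ⊆ U), qiOpen ρ U) < 1) :
    ∃ V : Set X, IsOpen V ∧ A ⊆ V ∧ qiOpen ρ V = 0 := by
  obtain ⟨V, hV⟩ := iInf_lt_iff.mp h
  obtain ⟨hVP, hVlt⟩ := iInf_lt_iff.mp hV
  refine ⟨V, hVP.1, hVP.2, ?_⟩
  rcases simple_qiOpen01 hρs hVP.1 with h0 | h1
  · exact h0
  · rw [h1] at hVlt
    exact absurd hVlt (lt_irrefl _)

/-- Part 3, closedness of `W_K`. -/
theorem WK_isClosed (hρ : IsQuasiIntegral ρ) (hρs : IsSimpleQI ρ)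
    {K : Set (X × Y)} (hK : IsCompact K) :
    IsClosed {y : Y | qiMeas ρ {x : X | (x, y) ∈ K} = 1} := by
  rw [← isOpen_compl_iff, isOpen_iff_mem_nhds]
  intro y₀ hy₀
  simp only [mem_compl_iff, mem_setOf_eq] at hy₀
  have h01 := hρs {x : X | (x, y₀) ∈ K} (Or.inr (isClosed_sectionY hK y₀))
  have h0 : qiMeas ρ {x : X | (x, y₀) ∈ K} = 0 := by
    rcases h01 with h | h
    · exact h
    · exact absurd h hy₀
  have hlt : (⨅ (U : Set X) (_ : IsOpen U ∧ {x : X | (x, y₀) ∈ K} ⊆ U), qiOpen ρ U) < 1 := by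
    rw [← qiMeas_eq_iInf, h0]
    norm_num
  obtain ⟨V, hVo, hKV, hV0⟩ := exists_null_open_of_lt hρs hlt
  obtain ⟨N, hNo, hyN, hN⟩ := fiber_nbhd hK hVo hKV
  rw [mem_nhds_iff]
  refine ⟨N, ?_, hNo, hyN⟩
  intro y hy
  simp only [mem_compl_iff, mem_setOf_eq]
  intro hcon
  have hle : qiMeas ρ {x : X | (x, y) ∈ K} ≤ qiOpen ρ V :=
    qiMeas_le_qiOpen ρ hVo (hN y hy)
  rw [hcon, hV0] at hle
  simp at hle

end CompactCase
end QLF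
namespace QLF

open Set

section CompactEq
variable {X Y : Type*} [TopologicalSpace X] [LocallyCompactSpace X] [T2Space X]
  [TopologicalSpace Y] [LocallyCompactSpace Y] [T2Space Y]
  {ρ : C_c(X, ℝ) → ℝ} {η : C_c(Y, ℝ) → ℝ}

/-- Part 3, the formula on compact sets. -/
theorem prod_compact_eq (hρ : IsQuasiIntegral ρ) (hη : IsQuasiIntegral η) (hρs : IsSimpleQI ρ)
    (hνcf : ∀ K : Set Y, IsCompact K → qiMeas η K ≠ ∞)
    {K : Set (X × Y)} (hK : IsCompact K) :
    qiMeas (prodQI η ρ) K = qiMeas η {y : Y | qiMeas ρ {x : X | (x, y) ∈ K} = 1} := by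
  classical
  set WK := {y : Y | qiMeas ρ {x : X | (x, y) ∈ K} = 1} with hWK
  apply le_antisymm
  · -- ≤ direction
    rw [qiMeas_eq_iInf η WK]
    refine le_iInf₂ fun W' hW' => ?_
    set π : Set Y := Prod.snd '' K with hπ
    have hπc : IsCompact π := hK.image continuous_snd
    set P : Set Y := π ∩ W'ᶜ with hPdef
    have hPc : IsCompact P := hπc.inter_right hW'.1.isClosed_compl
    have step : ∀ y ∈ P, ∃ VN : Set X × Set Y, IsOpen VN.1 ∧ qiOpen ρ VN.1 = 0 ∧
        IsOpen VN.2 ∧ y ∈ VN.2 ∧ ∀ y' ∈ VN.2, {x : X | (x, y') ∈ K} ⊆ VN.1 := by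
      intro y hy
      have hyW : y ∉ WK := fun hc => hy.2 (hW'.2 hc)
      have h0 : qiMeas ρ {x : X | (x, y) ∈ K} = 0 := by
        rcases hρs {x : X | (x, y) ∈ K} (Or.inr (isClosed_sectionY hK y)) with h | h
        · exact h
        · exact absurd h hyW
      have hlt : (⨅ (U : Set X) (_ : IsOpen U ∧ {x : X | (x, y) ∈ K} ⊆ U), qiOpen ρ U) < 1 := by
        rw [← qiMeas_eq_iInf, h0]
        norm_num
      obtain ⟨V, hVo, hKV, hV0⟩ := exists_null_open_of_lt hρs hlt
      obtain ⟨N, hNo, hyN, hN⟩ := fiber_nbhd hK hVo hKV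
      exact ⟨(V, N), hVo, hV0, hNo, hyN, hN⟩
    choose! VN h1 h2 h3 h4 h5 using step
    obtain ⟨b', hb'P, hb'fin, hb'cov⟩ := hPc.elim_finite_subcover_image
      (fun y hy => h3 y hy) (fun y hy => mem_biUnion hy (h4 y hy))
    set t : Finset Y := hb'fin.toFinset with htdef
    have htP : ∀ i ∈ t, i ∈ P := by
      intro i hi
      rw [htdef, Set.Finite.mem_toFinset] at hi
      exact hb'P hi
    have htcov : P ⊆ ⋃ i ∈ t, (VN i).2 := by
      intro y hy
      have := hb'cov hy
      simp only [mem_iUnion, exists_prop] at this ⊢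
      obtain ⟨i, hi1, hi2⟩ := this
      exact ⟨i, by rw [htdef, Set.Finite.mem_toFinset]; exact hi1, hi2⟩
    obtain ⟨C, hCc, hCN, hCcov⟩ := hPc.finite_compact_cover t (fun i => (VN i).2)
      (fun i hi => h3 i (htP i hi)) htcov
    have hLex : ∀ i ∈ t, ∃ L : Set Y, IsCompact L ∧ C i ⊆ interior L ∧ L ⊆ (VN i).2 :=
      fun i hi => exists_compact_between (hCc i) (h3 i (htP i hi)) (hCN i)
    choose! L hL1 hL2 hL3 using hLex
    set O : Set (X × Y) :=
      (⋂ i ∈ t, (((VN i).1 ×ˢ (VN i).2) ∪ ((univ : Set X) ×ˢ (L i)ᶜ))) ∩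
        ((univ : Set X) ×ˢ (W' ∪ ⋃ i ∈ t, interior (L i))) with hOdef
    have hOopen : IsOpen O := by
      apply IsOpen.inter
      · apply isOpen_biInter_finset
        intro i hi
        exact ((h1 i (htP i hi)).prod (h3 i (htP i hi))).union
          (isOpen_univ.prod (hL1 i hi).isClosed.isOpen_compl)
      · exact isOpen_univ.prod (hW'.1.union (isOpen_biUnion fun i _ => isOpen_interior))
    have hKO : K ⊆ O := by
      rintro ⟨x, y⟩ hp
      constructor
      · simp only [mem_iInter]
        intro i hi
        by_cases hyN : y ∈ (VN i).2
        · exact Or.inl ⟨h5 i (htP i hi) y hyN hp, hyN⟩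
        · refine Or.inr ⟨trivial, ?_⟩
          intro hyL
          exact hyN (hL3 i hi hyL)
      · refine ⟨trivial, ?_⟩
        by_cases hyW : y ∈ W'
        · exact Or.inl hyW
        · right
          have hyP : y ∈ P := ⟨⟨(x, y), hp, rfl⟩, hyW⟩
          have := hCcov ▸ hyP
          simp only [mem_iUnion, exists_prop] at this ⊢
          obtain ⟨i, hi, hyC⟩ := this
          exact ⟨i, hi, hL2 i hi hyC⟩
    have hWO_sub : {y : Y | qiMeas ρ {x : X | (x, y) ∈ O} = 1} ⊆ W' := by
      intro y hy
      simp only [mem_setOf_eq] at hy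
      by_contra hyW
      by_cases hyL : y ∈ ⋃ i ∈ t, interior (L i)
      · simp only [mem_iUnion, exists_prop] at hyL
        obtain ⟨i, hi, hyLi⟩ := hyL
        have hOsub : {x : X | (x, y) ∈ O} ⊆ (VN i).1 := by
          intro x hx
          have hx1 := hx.1
          simp only [mem_iInter] at hx1
          have := hx1 i hi
          rcases this with h | h
          · exact h.1
          · exact absurd (interior_subset hyLi) h.2
        have hle : qiMeas ρ {x : X | (x, y) ∈ O} ≤ qiOpen ρ (VN i).1 :=
          qiMeas_le_qiOpen ρ (h1 i (htP i hi)) hOsub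
        rw [hy, h2 i (htP i hi)] at hle
        simp at hle
      · have hOempty : {x : X | (x, y) ∈ O} = (∅ : Set X) := by
          ext x
          simp only [mem_setOf_eq, mem_empty_iff_false, iff_false]
          intro hx
          have := hx.2.2
          rcases this with h | h
          · exact hyW h
          · exact hyL h
        rw [hOempty, qiMeas_of_isOpen _ isOpen_empty, qiOpen_empty hρ] at hy
        simp at hy
    calc qiMeas (prodQI η ρ) K ≤ qiOpen (prodQI η ρ) O :=
        qiMeas_le_qiOpen _ hOopen hKO
    _ = qiMeas (prodQI η ρ) O := (qiMeas_of_isOpen _ hOopen).symm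
    _ = qiMeas η {y : Y | qiMeas ρ {x : X | (x, y) ∈ O} = 1} :=
        prod_open_eq hρ hη hρs hνcf hOopen
    _ = qiOpen η {y : Y | qiMeas ρ {x : X | (x, y) ∈ O} = 1} :=
        qiMeas_of_isOpen _ (W_isOpen hρ hρs hOopen)
    _ ≤ qiOpen η W' := qiOpen_mono η hWO_sub
  · -- ≥ direction
    rw [qiMeas_eq_iInf (prodQI η ρ) K]
    refine le_iInf₂ fun O hO => ?_
    have hWOo : IsOpen {y : Y | qiMeas ρ {x : X | (x, y) ∈ O} = 1} := W_isOpen hρ hρs hO.1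
    have hsub : WK ⊆ {y : Y | qiMeas ρ {x : X | (x, y) ∈ O} = 1} := by
      intro y hy
      simp only [hWK, mem_setOf_eq] at hy ⊢
      have hle : qiMeas ρ {x : X | (x, y) ∈ K} ≤ qiOpen ρ {x : X | (x, y) ∈ O} := by
        apply qiMeas_le_qiOpen ρ (isOpen_sectionY hO.1 y)
        intro x hx
        exact hO.2 hx
      rw [hy] at hle
      rcases simple_qiOpen01 hρs (isOpen_sectionY hO.1 y) with h0 | h1
      · rw [h0] at hle
        simp at hle
      · rw [qiMeas_of_isOpen _ (isOpen_sectionY hO.1 y)]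
        exact h1
    calc qiMeas η WK ≤ qiOpen η {y : Y | qiMeas ρ {x : X | (x, y) ∈ O} = 1} :=
        qiMeas_le_qiOpen η hWOo hsub
    _ = qiMeas η {y : Y | qiMeas ρ {x : X | (x, y) ∈ O} = 1} :=
        (qiMeas_of_isOpen _ hWOo).symm
    _ = qiMeas (prodQI η ρ) O := (prod_open_eq hρ hη hρs hνcf hO.1).symm
    _ = qiOpen (prodQI η ρ) O := qiMeas_of_isOpen _ hO.1

end CompactEq
end QLF

namespace QLF
theorem statement14 {X Y : Type*}
    [TopologicalSpace X] [LocallyCompactSpace X] [T2Space X] [ConnectedSpace X]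
    [TopologicalSpace Y] [LocallyCompactSpace Y] [T2Space Y] [ConnectedSpace Y]
    (ρ : C_c(X, ℝ) → ℝ) (η : C_c(Y, ℝ) → ℝ)
    (hρ : IsQuasiIntegral ρ) (hη : IsQuasiIntegral η)
    (hρs : IsSimpleQI ρ)
    (hνcf : ∀ K : Set Y, IsCompact K → qiMeas η K ≠ ∞) :
    IsQuasiIntegral (prodQI η ρ) ∧
    (∀ U : Set (X × Y), IsOpen U →
      IsOpen {y : Y | qiMeas ρ {x : X | (x, y) ∈ U} = 1} ∧
      qiMeas (prodQI η ρ) U = qiMeas η {y : Y | qiMeas ρ {x : X | (x, y) ∈ U} = 1}) ∧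
    (qiMeas η (Set.univ : Set Y) ≠ ∞ →
      ∀ K : Set (X × Y), IsCompact K →
        IsClosed {y : Y | qiMeas ρ {x : X | (x, y) ∈ K} = 1} ∧
        qiMeas (prodQI η ρ) K = qiMeas η {y : Y | qiMeas ρ {x : X | (x, y) ∈ K} = 1}) := by
  exact ⟨prod_is_qi hρ hη hρs,
    fun U hU => ⟨W_isOpen hρ hρs hU, prod_open_eq hρ hη hρs hνcf hU⟩,
    fun _ K hK => ⟨WK_isClosed hρ hρs hK, prod_compact_eq hρ hη hρs hνcf hK⟩⟩
end QLF
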